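/- arXiv:2310.11515 — 5 statements merged into one kernel-verified Lean document; each statement's English description precedes it below -/
import Mathlib

section
/- If λ ≥ max{1, L²}, then for every t ≥ 1, Δ_t ≤ (8 d² / p_min²) · log( (dλ + (t−1)L²) / d ). -/
open Matrix Finset


/-- midpoint strong concavity of log on (0,1] -/
lemma vbmle_log_sc {a b : ℝ} (ha : 0 < a) (ha1 : a ≤ 1) (hb : 0 < b) (hb1 : b ≤ 1) :
    (Real.log a + Real.log b) / 2 + (a - b) ^ 2 / 8 ≤ Real.log ((a + b) / 2) := by
  set m : ℝ := (a + b) / 2 with hm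
  have hm0 : 0 < m := by positivity
  have hm1 : m ≤ 1 := by rw [hm]; linarith
  have h1 : Real.log (a * b / m ^ 2) ≤ a * b / m ^ 2 - 1 :=
    Real.log_le_sub_one_of_pos (by positivity)
  have h2 : Real.log (a * b / m ^ 2) = Real.log a + Real.log b - 2 * Real.log m := by
    rw [Real.log_div (by positivity) (by positivity), Real.log_mul ha.ne' hb.ne',
      Real.log_pow]
    push_cast; ring
  have h3 : m ^ 2 - a * b = (a - b) ^ 2 / 4 := by rw [hm]; ring
  have h4 : a * b / m ^ 2 - 1 = -((m ^ 2 - a * b) / m ^ 2) := by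
    field_simp
    ring
  have ht : 0 ≤ m ^ 2 - a * b := by nlinarith [sq_nonneg (a - b)]
  have hmsq : m ^ 2 ≤ 1 := by nlinarith
  have h5 : (m ^ 2 - a * b) ≤ (m ^ 2 - a * b) / m ^ 2 := by
    rw [le_div_iff₀ (by positivity)]
    nlinarith [mul_le_mul_of_nonneg_left hmsq ht]
  nlinarith [h1, h2, h3, h4, h5]

lemma vbmle_min_le_log {w : ℝ} (hw : 0 ≤ w) : min 1 w ≤ 2 * Real.log (1 + w) := by
  rcases le_total w 1 with h | h
  · have : Real.log (1 / (1 + w)) ≤ 1 / (1 + w) - 1 := Real.log_le_sub_one_of_pos (by positivity)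
    rw [Real.log_div one_ne_zero (by positivity), Real.log_one] at this
    have h2 : w / (1 + w) ≤ Real.log (1 + w) := by
      have : 1 - 1 / (1 + w) = w / (1 + w) := by field_simp; ring
      linarith [this]
    have h3 : w / 2 ≤ w / (1 + w) := by
      apply div_le_div_of_nonneg_left hw (by positivity) (by linarith)
    simp only [min_le_iff]
    right; linarith
  · have h2 : Real.log 2 ≤ Real.log (1 + w) :=
      Real.log_le_log (by norm_num) (by linarith)
    have h3 : (0.6931471803 : ℝ) < Real.log 2 := Real.log_two_gt_d9
    simp only [min_le_iff]
    left; linarith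

variable {d : ℕ}

lemma vbmle_vecMulVec_mulVec (u v y : Fin d → ℝ) :
    vecMulVec u v *ᵥ y = (v ⬝ᵥ y) • u := by
  ext i
  simp [vecMulVec, mulVec, dotProduct, Finset.mul_sum, Finset.sum_mul, mul_comm, mul_assoc, mul_left_comm]

lemma vbmle_quadform (lam : ℝ) (s : Finset ℕ) (ψ : ℕ → Fin d → ℝ) (x y : Fin d → ℝ) :
    x ⬝ᵥ ((lam • (1 : Matrix (Fin d) (Fin d) ℝ) + ∑ j ∈ s, vecMulVec (ψ j) (ψ j)) *ᵥ y)
      = lam * (x ⬝ᵥ y) + ∑ j ∈ s, (ψ j ⬝ᵥ x) * (ψ j ⬝ᵥ y) := by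
  rw [add_mulVec, dotProduct_add]
  congr 1
  · rw [smul_mulVec, one_mulVec, dotProduct_smul]; rfl
  · induction s using Finset.induction with
    | empty => simp
    | @insert _ _ h ih =>
        rw [Finset.sum_insert h, Finset.sum_insert h, add_mulVec, dotProduct_add, ih,
          vbmle_vecMulVec_mulVec, dotProduct_smul]
        simp only [smul_eq_mul]
        rw [dotProduct_comm x (ψ _)]
        ring

lemma vbmle_hermitian (lam : ℝ) (s : Finset ℕ) (ψ : ℕ → Fin d → ℝ) :
    (lam • (1 : Matrix (Fin d) (Fin d) ℝ) + ∑ j ∈ s, vecMulVec (ψ j) (ψ j)).IsHermitian := by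
  unfold Matrix.IsHermitian
  ext i j
  simp [Matrix.add_apply, Matrix.sum_apply, vecMulVec, Matrix.one_apply, Matrix.smul_apply,
    conjTranspose_apply, mul_comm, eq_comm]

lemma vbmle_posdef (lam : ℝ) (hlam : 0 < lam) (s : Finset ℕ) (ψ : ℕ → Fin d → ℝ) :
    (lam • (1 : Matrix (Fin d) (Fin d) ℝ) + ∑ j ∈ s, vecMulVec (ψ j) (ψ j)).PosDef := by
  refine Matrix.PosDef.of_dotProduct_mulVec_pos (vbmle_hermitian lam s ψ) (fun x hx => ?_)
  have : star x = x := by simp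
  rw [this, vbmle_quadform]
  have h1 : 0 < x ⬝ᵥ x := by
    have h0 : x ⬝ᵥ x ≠ 0 := fun h => hx (dotProduct_self_eq_zero.mp h)
    have hnn : 0 ≤ x ⬝ᵥ x := Finset.sum_nonneg fun i _ => mul_self_nonneg (x i)
    exact lt_of_le_of_ne hnn (Ne.symm h0)
  have h2 : (0:ℝ) ≤ ∑ j ∈ s, (ψ j ⬝ᵥ x) * (ψ j ⬝ᵥ x) :=
    Finset.sum_nonneg fun j _ => mul_self_nonneg _
  nlinarith [mul_pos hlam h1]

lemma vbmle_trace (lam : ℝ) (s : Finset ℕ) (ψ : ℕ → Fin d → ℝ) :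
    (lam • (1 : Matrix (Fin d) (Fin d) ℝ) + ∑ j ∈ s, vecMulVec (ψ j) (ψ j)).trace
      = lam * d + ∑ j ∈ s, (ψ j ⬝ᵥ ψ j) := by
  rw [trace_add, trace_smul, trace_one, trace_sum]
  have h1 : ∀ j, (vecMulVec (ψ j) (ψ j)).trace = ψ j ⬝ᵥ ψ j := fun j => by
    simp [Matrix.trace, Matrix.diag, vecMulVec, dotProduct]
  simp only [h1, smul_eq_mul, Fintype.card_fin]

lemma vbmle_cs {M : Matrix (Fin d) (Fin d) ℝ} (hM : M.PosDef) (p u : Fin d → ℝ) :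
    (p ⬝ᵥ u) ^ 2 ≤ (p ⬝ᵥ (M⁻¹ *ᵥ p)) * (u ⬝ᵥ (M *ᵥ u)) := by
  classical
  have hdet : IsUnit M.det := isUnit_iff_ne_zero.mpr hM.det_pos.ne'
  have hinv : M * M⁻¹ = 1 := Matrix.mul_nonsing_inv M hdet
  have hsymm : Mᵀ = M := by
    have h := hM.isHermitian.eq
    rwa [Matrix.conjTranspose_eq_transpose_of_trivial] at h
  set v : Fin d → ℝ := M⁻¹ *ᵥ p with hv
  have hMv : M *ᵥ v = p := by
    rw [hv, Matrix.mulVec_mulVec, hinv, Matrix.one_mulVec]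
  have hB : ∀ x y : Fin d → ℝ, x ⬝ᵥ (M *ᵥ y) = y ⬝ᵥ (M *ᵥ x) := by
    intro x y
    rw [Matrix.dotProduct_mulVec, ← Matrix.mulVec_transpose, hsymm, dotProduct_comm]
  have hpu : p ⬝ᵥ u = v ⬝ᵥ (M *ᵥ u) := by
    rw [← hMv, dotProduct_comm, hB u v]
  have hpv : p ⬝ᵥ (M⁻¹ *ᵥ p) = v ⬝ᵥ (M *ᵥ v) := by
    rw [← hv, dotProduct_comm, ← hMv]
  rw [hpu, hpv]
  have hq : ∀ t : ℝ, 0 ≤ (u ⬝ᵥ (M *ᵥ u)) + 2 * t * (v ⬝ᵥ (M *ᵥ u)) + t ^ 2 * (v ⬝ᵥ (M *ᵥ v)) := by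
    intro t
    have h := hM.posSemidef.dotProduct_mulVec_nonneg (u + t • v)
    simp only [star_trivial] at h
    have expand : (u + t • v) ⬝ᵥ (M *ᵥ (u + t • v))
        = (u ⬝ᵥ (M *ᵥ u)) + 2 * t * (v ⬝ᵥ (M *ᵥ u)) + t ^ 2 * (v ⬝ᵥ (M *ᵥ v)) := by
      simp only [Matrix.mulVec_add, Matrix.mulVec_smul, dotProduct_add, add_dotProduct,
        smul_dotProduct, dotProduct_smul, smul_eq_mul]
      rw [hB u v]; ring
    rw [expand] at h
    exact h
  rcases eq_or_ne v 0 with hv0 | hvne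
  · simp [hv0]
  · have hbvv : 0 < v ⬝ᵥ (M *ᵥ v) := by
      have h := hM.dotProduct_mulVec_pos hvne
      simpa using h
    have h := hq (-(v ⬝ᵥ (M *ᵥ u) / (v ⬝ᵥ (M *ᵥ v))))
    have h2 : (u ⬝ᵥ (M *ᵥ u)) + 2 * (-(v ⬝ᵥ (M *ᵥ u) / (v ⬝ᵥ (M *ᵥ v)))) * (v ⬝ᵥ (M *ᵥ u))
        + (-(v ⬝ᵥ (M *ᵥ u) / (v ⬝ᵥ (M *ᵥ v)))) ^ 2 * (v ⬝ᵥ (M *ᵥ v))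
        = (u ⬝ᵥ (M *ᵥ u)) - (v ⬝ᵥ (M *ᵥ u)) ^ 2 / (v ⬝ᵥ (M *ᵥ v)) := by
      field_simp; ring
    rw [h2] at h
    have h3 : (v ⬝ᵥ (M *ᵥ u)) ^ 2 / (v ⬝ᵥ (M *ᵥ v)) ≤ u ⬝ᵥ (M *ᵥ u) := by linarith
    calc (v ⬝ᵥ (M *ᵥ u)) ^ 2 = (v ⬝ᵥ (M *ᵥ u)) ^ 2 / (v ⬝ᵥ (M *ᵥ v)) * (v ⬝ᵥ (M *ᵥ v)) := by
          field_simp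
      _ ≤ (u ⬝ᵥ (M *ᵥ u)) * (v ⬝ᵥ (M *ᵥ v)) := mul_le_mul_of_nonneg_right h3 hbvv.le
      _ = (v ⬝ᵥ (M *ᵥ v)) * (u ⬝ᵥ (M *ᵥ u)) := mul_comm _ _

lemma vbmle_det_rank_one {M : Matrix (Fin d) (Fin d) ℝ} (hM : M.PosDef) (u : Fin d → ℝ) :
    (M + vecMulVec u u).det = M.det * (1 + u ⬝ᵥ (M⁻¹ *ᵥ u)) := by
  classical
  have hdet : IsUnit M.det := isUnit_iff_ne_zero.mpr hM.det_pos.ne'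
  have hinv : M * M⁻¹ = 1 := Matrix.mul_nonsing_inv M hdet
  have h1 : M + vecMulVec u u = M * (1 + M⁻¹ * vecMulVec u u) := by
    rw [mul_add, mul_one, ← mul_assoc, hinv, one_mul]
  rw [h1, det_mul]
  congr 1
  rw [Matrix.vecMulVec_eq Unit, ← Matrix.mul_assoc, Matrix.det_one_add_mul_comm]
  rw [det_unique]
  simp [Matrix.add_apply, Matrix.one_apply, Matrix.mul_apply, Matrix.row_apply, Matrix.col_apply,
    Matrix.mulVec, dotProduct, Finset.mul_sum, mul_comm]

lemma vbmle_trace_eq_sum_eig {M : Matrix (Fin d) (Fin d) ℝ} (hM : M.IsHermitian) :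
    M.trace = ∑ i, hM.eigenvalues i := by
  classical
  simpa using hM.trace_eq_sum_eigenvalues

lemma vbmle_log_det_le (hd : 0 < d) {M : Matrix (Fin d) (Fin d) ℝ} (hM : M.PosDef) :
    Real.log M.det ≤ d * Real.log (M.trace / d) := by
  classical
  have hH := hM.isHermitian
  have hpos : ∀ i, 0 < hH.eigenvalues i := hM.eigenvalues_pos
  have hdet : M.det = ∏ i, hH.eigenvalues i := by
    have := hH.det_eq_prod_eigenvalues
    simpa using this
  have htr : M.trace = ∑ i, hH.eigenvalues i := vbmle_trace_eq_sum_eig hH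
  set β : ℝ := M.trace / d with hβdef
  have htrpos : 0 < M.trace := by
    rw [htr]
    exact Finset.sum_pos (fun i _ => hpos i) (by simp [Finset.univ_nonempty_iff]; exact Fin.pos_iff_nonempty.mp hd)
  have hβ : 0 < β := by positivity
  have hlogsum : Real.log M.det = ∑ i, Real.log (hH.eigenvalues i) := by
    rw [hdet, Real.log_prod]
    exact fun i _ => (hpos i).ne'
  have hstep : ∀ i, Real.log (hH.eigenvalues i) ≤ hH.eigenvalues i / β - 1 + Real.log β := by
    intro i
    have h1 : Real.log (hH.eigenvalues i / β) ≤ hH.eigenvalues i / β - 1 :=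
      Real.log_le_sub_one_of_pos (div_pos (hpos i) hβ)
    rw [Real.log_div (hpos i).ne' hβ.ne'] at h1
    linarith
  calc Real.log M.det = ∑ i, Real.log (hH.eigenvalues i) := hlogsum
    _ ≤ ∑ i, (hH.eigenvalues i / β - 1 + Real.log β) := Finset.sum_le_sum fun i _ => hstep i
    _ = (∑ i, hH.eigenvalues i) / β - d + d * Real.log β := by
        rw [Finset.sum_add_distrib, Finset.sum_sub_distrib, ← Finset.sum_div]
        simp [Finset.card_univ]
    _ = d * Real.log β := by
        rw [← htr, hβdef]
        have : M.trace / (M.trace / d) = d := by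
          field_simp
        rw [this]
        ring

set_option maxHeartbeats 1000000 in
/-- regret of online learning / bound on `Δ_t`: if `λ ≥ max{1, L²}`,
then for every `t ≥ 1`, `Δ_t ≤ (8 d² / p_min²) · log((dλ + (t−1)L²)/d)`. -/
theorem vbmle_Delta_upper_bound
    (d : ℕ) (hd : 1 ≤ d)
    (lam L pmin : ℝ) (hlam : 0 ≤ lam) (hL : 0 < L)
    (hpmin0 : 0 < pmin) (hpmin1 : pmin ≤ 1)
    (hlam' : max 1 (L ^ 2) ≤ lam)
    (S A : Type) [Fintype S] [Nonempty S] [Fintype A] [Nonempty A]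
    (φ : S → A → S → (Fin d → ℝ))
    (hφ : ∀ s a s', Real.sqrt (φ s a s' ⬝ᵥ φ s a s') ≤ L)
    (P : Set (Fin d → ℝ)) (hPne : P.Nonempty) (hPcomp : IsCompact P) (hPconv : Convex ℝ P)
    (hPsum : ∀ θ ∈ P, ∀ s a, (∑ s', φ s a s' ⬝ᵥ θ) = 1)
    (hPmin : ∀ θ ∈ P, ∀ s a s', pmin ≤ φ s a s' ⬝ᵥ θ)
    (θstar : Fin d → ℝ) (hθstar : θstar ∈ P)
    (s : ℕ → S) (a : ℕ → A)
    (ℓ : ℕ → (Fin d → ℝ) → ℝ)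
    (hℓ : ∀ t θ, ℓ t θ =
      (∑ i ∈ Finset.Icc 1 (t - 1),
        Real.log ((φ (s i) (a i) (s (i + 1)) ⬝ᵥ θ) / (φ (s i) (a i) (s (i + 1)) ⬝ᵥ θstar)))
      - lam / 2 * (θ ⬝ᵥ θ))
    (θhat : ℕ → (Fin d → ℝ))
    (hθhatmem : ∀ t, θhat t ∈ P)
    (hθhatmax : ∀ t, 1 ≤ t → ∀ θ ∈ P, ℓ t θ ≤ ℓ t (θhat t))
    (hθhat0 : θhat 0 = θhat 1)
    (Δ : ℕ → ℝ)
    (hΔ : ∀ t, Δ t =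
      (∑ i ∈ Finset.Icc 1 (t - 1),
        Real.log ((φ (s i) (a i) (s (i + 1)) ⬝ᵥ θhat t) / (φ (s i) (a i) (s (i + 1)) ⬝ᵥ θhat i)))
      - lam / 2 * ((θhat t ⬝ᵥ θhat t) - (θhat 0 ⬝ᵥ θhat 0))) :
    ∀ t, 1 ≤ t →
      Δ t ≤ 8 * (d : ℝ) ^ 2 / pmin ^ 2 *
        Real.log (((d : ℝ) * lam + ((t : ℝ) - 1) * L ^ 2) / (d : ℝ)) := by
  classical
  -- basic facts
  have hdR : (0:ℝ) < d := by exact_mod_cast Nat.pos_of_ne_zero (by omega)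
  have hlam1 : (1:ℝ) ≤ lam := le_trans (le_max_left _ _) hlam'
  have hlamL : L ^ 2 ≤ lam := le_trans (le_max_right _ _) hlam'
  have hlam0 : (0:ℝ) < lam := lt_of_lt_of_le one_pos hlam1
  set ψ : ℕ → (Fin d → ℝ) := fun i => φ (s i) (a i) (s (i + 1)) with hψdef
  have hflow : ∀ θ ∈ P, ∀ i : ℕ, pmin ≤ ψ i ⬝ᵥ θ := fun θ hθ i => hPmin θ hθ _ _ _
  have hfpos : ∀ θ ∈ P, ∀ i : ℕ, 0 < ψ i ⬝ᵥ θ := fun θ hθ i =>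
    lt_of_lt_of_le hpmin0 (hflow θ hθ i)
  have hfup : ∀ θ ∈ P, ∀ i : ℕ, ψ i ⬝ᵥ θ ≤ 1 := by
    intro θ hθ i
    have hsum := hPsum θ hθ (s i) (a i)
    have hterm : ∀ s' : S, 0 ≤ φ (s i) (a i) s' ⬝ᵥ θ := fun s' =>
      le_trans hpmin0.le (hPmin θ hθ _ _ _)
    calc ψ i ⬝ᵥ θ ≤ ∑ s', φ (s i) (a i) s' ⬝ᵥ θ :=
          Finset.single_le_sum (fun s' _ => hterm s') (Finset.mem_univ (s (i+1)))
      _ = 1 := hsum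
  have hψL : ∀ i : ℕ, ψ i ⬝ᵥ ψ i ≤ L ^ 2 := by
    intro i
    have h1 : 0 ≤ ψ i ⬝ᵥ ψ i := Finset.sum_nonneg fun k _ => mul_self_nonneg _
    have h2 := hφ (s i) (a i) (s (i+1))
    nlinarith [Real.sq_sqrt h1, Real.sqrt_nonneg (ψ i ⬝ᵥ ψ i)]
  -- rewritten likelihood
  have hℓP : ∀ t : ℕ, ∀ θ ∈ P, ℓ t θ =
      (∑ j ∈ Finset.Icc 1 (t-1), Real.log (ψ j ⬝ᵥ θ))
      - (∑ j ∈ Finset.Icc 1 (t-1), Real.log (ψ j ⬝ᵥ θstar))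
      - lam / 2 * (θ ⬝ᵥ θ) := by
    intro t θ hθ
    rw [hℓ]
    rw [show (∑ i ∈ Finset.Icc 1 (t - 1),
        Real.log ((φ (s i) (a i) (s (i + 1)) ⬝ᵥ θ) / (φ (s i) (a i) (s (i + 1)) ⬝ᵥ θstar)))
        = ∑ j ∈ Finset.Icc 1 (t-1), (Real.log (ψ j ⬝ᵥ θ) - Real.log (ψ j ⬝ᵥ θstar)) from
      Finset.sum_congr rfl fun j _ =>
        Real.log_div (hfpos θ hθ j).ne' (hfpos θstar hθstar j).ne']
    rw [Finset.sum_sub_distrib]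
  -- per-step gain
  set g : ℕ → ℝ := fun i => ℓ (i+1) (θhat (i+1)) - ℓ (i+1) (θhat i) with hgdef
  have hg0 : ∀ i : ℕ, 0 ≤ g i := fun i =>
    sub_nonneg.mpr (hθhatmax (i+1) (by omega) _ (hθhatmem i))
  -- key identity : Δ t = ∑ g
  have hsplitIcc : ∀ t : ℕ, 1 ≤ t → Finset.Icc 1 t = insert t (Finset.Icc 1 (t-1)) := by
    intro t ht
    ext k
    simp only [Finset.mem_Icc, Finset.mem_insert]
    omega
  have hnotmem : ∀ t : ℕ, t ∉ Finset.Icc 1 (t-1) := by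
    intro t
    simp only [Finset.mem_Icc]
    omega
  have hDg : ∀ t : ℕ, 1 ≤ t → Δ t = ∑ i ∈ Finset.Icc 1 (t-1), g i := by
    have hA : ∀ t : ℕ, 1 ≤ t → ℓ t (θhat t)
        = -(lam/2) * (θhat 1 ⬝ᵥ θhat 1)
          + (∑ i ∈ Finset.Icc 1 (t-1), (Real.log (ψ i ⬝ᵥ θhat i) - Real.log (ψ i ⬝ᵥ θstar)))
          + ∑ i ∈ Finset.Icc 1 (t-1), g i := by
      intro t ht
      induction t, ht using Nat.le_induction with
      | base =>
          rw [hℓP 1 _ (hθhatmem 1)]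
          norm_num
      | succ t ht ih =>
          have h1 : ℓ (t+1) (θhat (t+1)) = ℓ (t+1) (θhat t) + g t := by
            simp only [hgdef]; ring
          have h2 : ℓ (t+1) (θhat t) = ℓ t (θhat t)
              + (Real.log (ψ t ⬝ᵥ θhat t) - Real.log (ψ t ⬝ᵥ θstar)) := by
            rw [hℓP (t+1) _ (hθhatmem t), hℓP t _ (hθhatmem t)]
            rw [show (t+1) - 1 = t from rfl, hsplitIcc t ht,
              Finset.sum_insert (hnotmem t), Finset.sum_insert (hnotmem t)]
            ring
          rw [h1, h2, ih]
          rw [show (t+1) - 1 = t from rfl, hsplitIcc t ht,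
            Finset.sum_insert (hnotmem t), Finset.sum_insert (hnotmem t)]
          ring
    intro t ht
    have h3 := hA t ht
    rw [hℓP t _ (hθhatmem t)] at h3
    rw [Finset.sum_sub_distrib] at h3
    rw [hΔ t, hθhat0]
    rw [show (∑ i ∈ Finset.Icc 1 (t - 1),
        Real.log ((φ (s i) (a i) (s (i + 1)) ⬝ᵥ θhat t) / (φ (s i) (a i) (s (i + 1)) ⬝ᵥ θhat i)))
        = ∑ i ∈ Finset.Icc 1 (t-1), (Real.log (ψ i ⬝ᵥ θhat t) - Real.log (ψ i ⬝ᵥ θhat i)) from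
      Finset.sum_congr rfl fun i _ =>
        Real.log_div (hfpos _ (hθhatmem t) i).ne' (hfpos _ (hθhatmem i) i).ne']
    rw [Finset.sum_sub_distrib]
    linarith
  -- matrices
  set M : ℕ → Matrix (Fin d) (Fin d) ℝ := fun k =>
    lam • (1 : Matrix (Fin d) (Fin d) ℝ) + ∑ j ∈ Finset.Icc 1 (k-1), vecMulVec (ψ j) (ψ j)
    with hMdef
  have hMpd : ∀ k, (M k).PosDef := fun k => vbmle_posdef lam hlam0 _ ψ
  set w : ℕ → ℝ := fun i => ψ i ⬝ᵥ ((M i)⁻¹ *ᵥ ψ i) with hwdef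
  have hw0 : ∀ i, 0 ≤ w i := by
    intro i
    have h := ((hMpd i).inv).posSemidef.dotProduct_mulVec_nonneg (ψ i)
    simpa using h
  -- per-step bound
  have hgw : ∀ i : ℕ, 1 ≤ i → g i ≤ 8 / pmin ^ 2 * Real.log (1 + w i) := by
    intro i hi
    set x : Fin d → ℝ := θhat i with hxdef
    set z : Fin d → ℝ := θhat (i+1) with hzdef
    have hx : x ∈ P := hθhatmem i
    have hz : z ∈ P := hθhatmem (i+1)
    set u : Fin d → ℝ := z - x with hudef
    set c : ℝ := ψ i ⬝ᵥ u with hcdef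
    have hgi : g i = ℓ (i+1) z - ℓ (i+1) x := rfl
    have hdotsub : ∀ p : Fin d → ℝ, p ⬝ᵥ u = p ⬝ᵥ z - p ⬝ᵥ x := fun p => by
      rw [hudef, dotProduct_sub]
    set m : Fin d → ℝ := (1/2 : ℝ) • x + (1/2 : ℝ) • z with hmdef
    have hm : m ∈ P := hPconv hx hz (by norm_num) (by norm_num) (by norm_num)
    have hmdot : ∀ p : Fin d → ℝ, p ⬝ᵥ m = (p ⬝ᵥ x + p ⬝ᵥ z)/2 := fun p => by
      rw [hmdef, dotProduct_add, dotProduct_smul, dotProduct_smul]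
      simp only [smul_eq_mul]
      ring
    -- strong concavity at the midpoint
    have hsc : ℓ (i+1) x / 2 + ℓ (i+1) z / 2
        + (1/8) * (lam * (u ⬝ᵥ u) + ∑ j ∈ Finset.Icc 1 i, (ψ j ⬝ᵥ u)^2) ≤ ℓ (i+1) m := by
      rw [hℓP (i+1) x hx, hℓP (i+1) z hz, hℓP (i+1) m hm]
      simp only [Nat.add_sub_cancel]
      have hsum : (∑ j ∈ Finset.Icc 1 i, Real.log (ψ j ⬝ᵥ x))/2
          + (∑ j ∈ Finset.Icc 1 i, Real.log (ψ j ⬝ᵥ z))/2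
          + (∑ j ∈ Finset.Icc 1 i, (ψ j ⬝ᵥ u)^2)/8
          ≤ ∑ j ∈ Finset.Icc 1 i, Real.log (ψ j ⬝ᵥ m) := by
        rw [Finset.sum_div, Finset.sum_div, Finset.sum_div,
          ← Finset.sum_add_distrib, ← Finset.sum_add_distrib]
        refine Finset.sum_le_sum fun j _ => ?_
        have hl := vbmle_log_sc (hfpos x hx j) (hfup x hx j) (hfpos z hz j) (hfup z hz j)
        have e1 : ψ j ⬝ᵥ m = (ψ j ⬝ᵥ x + ψ j ⬝ᵥ z)/2 := hmdot _
        have e2 : (ψ j ⬝ᵥ u)^2 = (ψ j ⬝ᵥ x - ψ j ⬝ᵥ z)^2 := by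
          rw [hdotsub]; ring
        rw [e1, e2]
        linarith
      have hxz : x ⬝ᵥ z = z ⬝ᵥ x := dotProduct_comm _ _
      have h1 : m ⬝ᵥ m = ((x ⬝ᵥ x + x ⬝ᵥ z)/2 + (z ⬝ᵥ x + z ⬝ᵥ z)/2)/2 := by
        rw [show m ⬝ᵥ m = (m ⬝ᵥ x + m ⬝ᵥ z)/2 from hmdot m,
          dotProduct_comm m x, dotProduct_comm m z, hmdot x, hmdot z,
          dotProduct_comm x z, dotProduct_comm z x]
      have huu : u ⬝ᵥ u = (z ⬝ᵥ z - z ⬝ᵥ x) - (x ⬝ᵥ z - x ⬝ᵥ x) := by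
        rw [show u ⬝ᵥ u = u ⬝ᵥ z - u ⬝ᵥ x from hdotsub u,
          dotProduct_comm u z, dotProduct_comm u x, hdotsub z, hdotsub x]
      have hkey : lam/2 * (m ⬝ᵥ m) + lam * (u ⬝ᵥ u)/8
          = lam/4 * (x ⬝ᵥ x) + lam/4 * (z ⬝ᵥ z) := by
        rw [h1, huu, hxz]; ring
      have hT : (0:ℝ) ≤ ∑ j ∈ Finset.Icc 1 i, (ψ j ⬝ᵥ u)^2 :=
        Finset.sum_nonneg fun j _ => sq_nonneg _
      linarith [hsum, hkey]
    -- lower bound on g i via strong concavity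
    have hmax : ℓ (i+1) m ≤ ℓ (i+1) z := hθhatmax (i+1) (by omega) m hm
    have hMi : u ⬝ᵥ (M i *ᵥ u)
        = lam * (u ⬝ᵥ u) + ∑ j ∈ Finset.Icc 1 (i-1), (ψ j ⬝ᵥ u) * (ψ j ⬝ᵥ u) := by
      rw [hMdef]
      exact vbmle_quadform lam (Finset.Icc 1 (i-1)) ψ u u
    have hQ : (1/4) * (u ⬝ᵥ (M i *ᵥ u)) + (1/4) * c^2 ≤ g i := by
      have hTsplit : ∑ j ∈ Finset.Icc 1 i, (ψ j ⬝ᵥ u)^2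
          = c^2 + ∑ j ∈ Finset.Icc 1 (i-1), (ψ j ⬝ᵥ u)^2 := by
        rw [hsplitIcc i hi, Finset.sum_insert (hnotmem i), hcdef]
      have hsq : ∑ j ∈ Finset.Icc 1 (i-1), (ψ j ⬝ᵥ u) * (ψ j ⬝ᵥ u)
          = ∑ j ∈ Finset.Icc 1 (i-1), (ψ j ⬝ᵥ u)^2 :=
        Finset.sum_congr rfl fun j _ => (sq (ψ j ⬝ᵥ u)).symm
      rw [hgi, hMi, hsq]
      linarith [hsc, hmax, hTsplit]
    have hQ0 : (0:ℝ) ≤ u ⬝ᵥ (M i *ᵥ u) := by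
      have h := (hMpd i).posSemidef.dotProduct_mulVec_nonneg u
      rw [hMdef]
      simpa using h
    -- upper bound g i ≤ c / pmin
    have hstep : ∀ θ, θ ∈ P → ℓ (i+1) θ = ℓ i θ
        + (Real.log (ψ i ⬝ᵥ θ) - Real.log (ψ i ⬝ᵥ θstar)) := by
      intro θ hθ
      rw [hℓP (i+1) θ hθ, hℓP i θ hθ, show (i+1)-1 = i from rfl, hsplitIcc i hi,
        Finset.sum_insert (hnotmem i), Finset.sum_insert (hnotmem i)]
      ring
    have hgc : g i ≤ c / (ψ i ⬝ᵥ x) := by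
      have hle : ℓ i z ≤ ℓ i x := hθhatmax i hi z hz
      have hlog : Real.log (ψ i ⬝ᵥ z) - Real.log (ψ i ⬝ᵥ x) ≤ c / (ψ i ⬝ᵥ x) := by
        have h1 : Real.log ((ψ i ⬝ᵥ z) / (ψ i ⬝ᵥ x)) ≤ (ψ i ⬝ᵥ z) / (ψ i ⬝ᵥ x) - 1 :=
          Real.log_le_sub_one_of_pos (div_pos (hfpos z hz i) (hfpos x hx i))
        rw [Real.log_div (hfpos z hz i).ne' (hfpos x hx i).ne'] at h1
        have h2 : (ψ i ⬝ᵥ z) / (ψ i ⬝ᵥ x) - 1 = c / (ψ i ⬝ᵥ x) := by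
          rw [hcdef, hdotsub, sub_div, div_self (hfpos x hx i).ne']
        linarith
      rw [hgi, hstep z hz, hstep x hx]
      linarith
    have hc0 : 0 ≤ c := by
      have h1 : 0 ≤ c / (ψ i ⬝ᵥ x) := le_trans (hg0 i) hgc
      have h2 := mul_nonneg h1 (hfpos x hx i).le
      rwa [div_mul_cancel₀ _ (hfpos x hx i).ne'] at h2
    have hgp : g i ≤ c / pmin := by
      refine le_trans hgc ?_
      apply div_le_div_of_nonneg_left hc0 hpmin0 (hflow x hx i)
    -- Cauchy-Schwarz
    have hcs : c^2 ≤ w i * (u ⬝ᵥ (M i *ᵥ u)) := by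
      have h := vbmle_cs (hMpd i) (ψ i) u
      rw [hcdef, hwdef]
      exact h
    -- combine
    have hb1 : g i ≤ 4 / pmin^2 := by
      have h12 : c^2/4 ≤ c/pmin := le_trans (by linarith [hQ0, hQ]) hgp
      have h13 : c^2 * pmin ≤ 4 * c := by
        rw [div_le_div_iff₀ (by norm_num) hpmin0] at h12
        linarith
      have h14 : c * pmin ≤ 4 := by
        rcases hc0.eq_or_lt with h0 | hcpos
        · rw [← h0]; nlinarith [hpmin0]
        · have h13' : c * (c * pmin) ≤ c * 4 := by nlinarith [h13]
          exact le_of_mul_le_mul_left h13' hcpos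
      have h15 : c / pmin ≤ 4 / pmin^2 := by
        rw [div_le_div_iff₀ hpmin0 (by positivity)]
        nlinarith [hpmin0, h14]
      linarith
    have hb2 : g i ≤ 4 * w i / pmin^2 := by
      rcases (hg0 i).eq_or_lt with h0 | hpos
      · rw [← h0]
        exact div_nonneg (by nlinarith [hw0 i]) (by positivity)
      · have hGpm : g i * pmin ≤ c := by
          rw [le_div_iff₀ hpmin0] at hgp
          exact hgp
        have hsq2 : (g i * pmin) * (g i * pmin) ≤ c * c :=
          mul_le_mul hGpm hGpm (mul_nonneg hpos.le hpmin0.le) hc0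
        have hQ4 : u ⬝ᵥ (M i *ᵥ u) ≤ 4 * g i := by nlinarith [hQ, sq_nonneg c]
        have hWQ : w i * (u ⬝ᵥ (M i *ᵥ u)) ≤ w i * (4 * g i) :=
          mul_le_mul_of_nonneg_left hQ4 (hw0 i)
        have h17 : g i * (g i * pmin^2) ≤ g i * (4 * w i) := by nlinarith [hcs]
        have h16 : g i * pmin^2 ≤ 4 * w i := le_of_mul_le_mul_left h17 hpos
        rw [le_div_iff₀ (show (0:ℝ) < pmin^2 by positivity)]
        linarith
    have hmin : g i ≤ 4 / pmin^2 * min 1 (w i) := by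
      rcases le_total 1 (w i) with h | h
      · rw [min_eq_left h]; simpa using hb1
      · rw [min_eq_right h]
        calc g i ≤ 4 * w i / pmin^2 := hb2
          _ = 4 / pmin^2 * w i := by ring
    calc g i ≤ 4 / pmin^2 * min 1 (w i) := hmin
      _ ≤ 4 / pmin^2 * (2 * Real.log (1 + w i)) := by
          apply mul_le_mul_of_nonneg_left (vbmle_min_le_log (hw0 i)) (by positivity)
      _ = 8 / pmin^2 * Real.log (1 + w i) := by ring
  -- potential
  have hpot : ∀ t : ℕ, 1 ≤ t →
      ∑ i ∈ Finset.Icc 1 (t-1), Real.log (1 + w i)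
        = Real.log ((M t).det) - d * Real.log lam := by
    intro t ht
    induction t, ht using Nat.le_induction with
    | base =>
        have hM1 : M 1 = lam • (1 : Matrix (Fin d) (Fin d) ℝ) := by
          simp only [hMdef]
          simp
        rw [hM1, det_smul, det_one, mul_one, Real.log_pow]
        simp
    | succ t ht ih =>
        have hMrec : M (t+1) = M t + vecMulVec (ψ t) (ψ t) := by
          simp only [hMdef, Nat.add_sub_cancel]
          rw [hsplitIcc t ht, Finset.sum_insert (hnotmem t)]
          abel
        have hdetrec : (M (t+1)).det = (M t).det * (1 + w t) := by
          rw [hMrec]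
          exact vbmle_det_rank_one (hMpd t) (ψ t)
        have h1w : (0:ℝ) < 1 + w t := by linarith [hw0 t]
        rw [show (t+1)-1 = t from rfl, hsplitIcc t ht, Finset.sum_insert (hnotmem t), ih,
          hdetrec, Real.log_mul (hMpd t).det_pos.ne' h1w.ne']
        ring
  -- final assembly
  intro t ht
  set X : ℝ := ((d : ℝ) * lam + ((t : ℝ) - 1) * L ^ 2) / (d : ℝ) with hXdef
  have htcast : (1:ℝ) ≤ (t:ℝ) := by exact_mod_cast ht
  have hd1R : (1:ℝ) ≤ (d:ℝ) := by exact_mod_cast hd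
  have hX1 : (1:ℝ) ≤ X := by
    rw [hXdef, le_div_iff₀ hdR]
    nlinarith [sq_nonneg L, htcast, hd1R, hlam1]
  have hlogX0 : 0 ≤ Real.log X := Real.log_nonneg hX1
  have htr : (M t).trace = lam * d + ∑ j ∈ Finset.Icc 1 (t-1), (ψ j ⬝ᵥ ψ j) := by
    simp only [hMdef]
    exact vbmle_trace lam _ ψ
  have htrle : (M t).trace ≤ (d : ℝ) * lam + ((t : ℝ) - 1) * L ^ 2 := by
    rw [htr]
    have hsum : ∑ j ∈ Finset.Icc 1 (t-1), (ψ j ⬝ᵥ ψ j)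
        ≤ ((t:ℝ) - 1) * L ^ 2 := by
      calc ∑ j ∈ Finset.Icc 1 (t-1), (ψ j ⬝ᵥ ψ j)
          ≤ ∑ j ∈ Finset.Icc 1 (t-1), L ^ 2 := Finset.sum_le_sum fun j _ => hψL j
        _ = ((t-1 : ℕ) : ℝ) * L ^ 2 := by
            rw [Finset.sum_const, Nat.card_Icc]
            simp [nsmul_eq_mul]
        _ = ((t : ℝ) - 1) * L ^ 2 := by
            rw [Nat.cast_sub ht, Nat.cast_one]
    linarith
  have htrpos : 0 < (M t).trace := by
    rw [htr]
    have : (0:ℝ) ≤ ∑ j ∈ Finset.Icc 1 (t-1), (ψ j ⬝ᵥ ψ j) :=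
      Finset.sum_nonneg fun j _ => Finset.sum_nonneg fun k _ => mul_self_nonneg _
    nlinarith [hlam0, hdR]
  have hldet : Real.log ((M t).det) ≤ (d:ℝ) * Real.log X := by
    calc Real.log ((M t).det) ≤ (d:ℝ) * Real.log ((M t).trace / d) :=
          vbmle_log_det_le (by omega) (hMpd t)
      _ ≤ (d:ℝ) * Real.log X := by
          apply mul_le_mul_of_nonneg_left _ (by positivity)
          apply Real.log_le_log (by positivity)
          rw [hXdef, div_le_div_iff₀ hdR hdR]
          nlinarith [htrle, hdR]
  have hloglam : 0 ≤ Real.log lam := Real.log_nonneg hlam1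
  rw [hDg t ht]
  calc ∑ i ∈ Finset.Icc 1 (t-1), g i
      ≤ ∑ i ∈ Finset.Icc 1 (t-1), 8 / pmin ^ 2 * Real.log (1 + w i) :=
        Finset.sum_le_sum fun i hi => hgw i (Finset.mem_Icc.mp hi).1
    _ = 8 / pmin ^ 2 * ∑ i ∈ Finset.Icc 1 (t-1), Real.log (1 + w i) := by
        rw [Finset.mul_sum]
    _ = 8 / pmin ^ 2 * (Real.log ((M t).det) - (d:ℝ) * Real.log lam) := by
        rw [hpot t ht]
    _ ≤ 8 / pmin ^ 2 * ((d:ℝ) * Real.log X) := by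
        apply mul_le_mul_of_nonneg_left _ (by positivity)
        have hdl : (0:ℝ) ≤ (d:ℝ) * Real.log lam :=
          mul_nonneg (by positivity) hloglam
        linarith [hldet, hdl]
    _ ≤ 8 * (d : ℝ) ^ 2 / pmin ^ 2 * Real.log X := by
        have h8 : 8 * (d : ℝ) ^ 2 / pmin ^ 2 * Real.log X
            = 8 / pmin ^ 2 * ((d:ℝ)^2 * Real.log X) := by ring
        rw [h8]
        apply mul_le_mul_of_nonneg_left _ (by positivity)
        have hkey : 0 ≤ (d:ℝ) * (((d:ℝ) - 1) * Real.log X) :=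
          mul_nonneg (by positivity) (mul_nonneg (by linarith) hlogX0)
        nlinarith [hkey]
end

section
/- If λ > 0, then for every t ≥ 1, Δ_{t+1} ≤ Δ_t + (2 / p_min²) · ‖φ_t(s_{t+1})‖²_{A_t^{−1}}, where ‖v‖²_{A_t^{−1}} := vᵀ A_t^{−1} v. -/
open Matrix Finset

lemma vbmle_aux_concave :
    ConcaveOn ℝ (Set.Ioc (0:ℝ) 1) (fun y => Real.log y + y ^ 2 / 2) := by
  have h := strictConcaveOn_of_deriv2_neg (convex_Ioc (0:ℝ) 1)
    (f := fun y => Real.log y + y ^ 2 / 2) ?_ ?_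
  · exact h.concaveOn
  · apply ContinuousOn.add
    · exact Real.continuousOn_log.mono (by intro y hy; simp [ne_of_gt hy.1])
    · fun_prop
  · intro x hx
    rw [interior_Ioc] at hx
    have hx0 : (0:ℝ) < x := hx.1
    have hx1 : x < 1 := hx.2
    have hderiv : ∀ y ∈ Set.Ioi (0:ℝ), deriv (fun y => Real.log y + y ^ 2 / 2) y = y⁻¹ + y := by
      intro y hy
      have h1 : HasDerivAt (fun y : ℝ => Real.log y + y ^ 2 / 2) (y⁻¹ + y) y := by
        have := (Real.hasDerivAt_log (ne_of_gt hy)).add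
          (((hasDerivAt_pow 2 y)).div_const 2)
        refine this.congr_deriv ?_
        push_cast
        ring
      exact h1.deriv
    have heq : deriv (deriv (fun y => Real.log y + y ^ 2 / 2)) x
        = deriv (fun y : ℝ => y⁻¹ + y) x := by
      apply Filter.EventuallyEq.deriv_eq
      filter_upwards [Ioi_mem_nhds hx0] with y hy
      exact hderiv y hy
    have h2 : HasDerivAt (fun y : ℝ => y⁻¹ + y) (-(x^2)⁻¹ + 1) x :=
      (hasDerivAt_inv (ne_of_gt hx0)).add (hasDerivAt_id x)
    simp only [Function.iterate_succ, Function.iterate_zero, Function.comp_apply, id_eq]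
    rw [heq, h2.deriv]
    have : (1:ℝ) < (x^2)⁻¹ := by
      rw [lt_inv_comm₀] <;> nlinarith
    linarith

lemma vbmle_aux_key1 {a b c : ℝ} (ha0 : 0 < a) (ha1 : a ≤ 1) (hb0 : 0 < b) (hb1 : b ≤ 1)
    (hc0 : 0 ≤ c) (hc1 : c ≤ 1) :
    (1 - c) * Real.log a + c * Real.log b + c * (1 - c) * (b - a) ^ 2 / 2
      ≤ Real.log ((1 - c) * a + c * b) := by
  have h := vbmle_aux_concave.2 (Set.mem_Ioc.2 ⟨ha0, ha1⟩) (Set.mem_Ioc.2 ⟨hb0, hb1⟩)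
    (by linarith : (0:ℝ) ≤ 1 - c) hc0 (by ring)
  simp only [smul_eq_mul] at h
  nlinarith [h]

lemma vbmle_aux_cs {d : ℕ} {M : Matrix (Fin d) (Fin d) ℝ} (hM : M.PosDef)
    (u v : Fin d → ℝ) :
    (u ⬝ᵥ v) ^ 2 ≤ (u ⬝ᵥ M⁻¹ *ᵥ u) * (v ⬝ᵥ M *ᵥ v) := by
  have hdet : IsUnit M.det := isUnit_iff_ne_zero.2 hM.det_pos.ne'
  have hsymm : Mᵀ = M := hM.isHermitian.eq
  set w : Fin d → ℝ := M⁻¹ *ᵥ u with hw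
  have hMw : M *ᵥ w = u := by
    rw [hw, Matrix.mulVec_mulVec, Matrix.mul_nonsing_inv _ hdet, Matrix.one_mulVec]
  have hB : ∀ x y : Fin d → ℝ, x ⬝ᵥ M *ᵥ y = y ⬝ᵥ M *ᵥ x := by
    intro x y
    rw [Matrix.dotProduct_mulVec,
      show x ᵥ* M = M *ᵥ x by conv_lhs => rw [← hsymm, Matrix.vecMul_transpose]]
    exact dotProduct_comm _ _
  have hu : u ⬝ᵥ v = w ⬝ᵥ M *ᵥ v := by
    rw [← hMw, dotProduct_comm, hB]
  have hN : u ⬝ᵥ M⁻¹ *ᵥ u = w ⬝ᵥ M *ᵥ w := by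
    rw [← hw, ← hMw, dotProduct_comm, hMw]
  have hpos : ∀ x : Fin d → ℝ, 0 ≤ x ⬝ᵥ M *ᵥ x := by
    intro x
    have := hM.posSemidef.dotProduct_mulVec_nonneg x
    simpa using this
  rw [hu, hN]
  by_cases hw0 : w = 0
  · simp [hw0]
  · have hww : 0 < w ⬝ᵥ M *ᵥ w := by simpa using hM.dotProduct_mulVec_pos hw0
    set r : ℝ := (w ⬝ᵥ M *ᵥ v) / (w ⬝ᵥ M *ᵥ w) with hr
    have hexp : 0 ≤ (v - r • w) ⬝ᵥ M *ᵥ (v - r • w) := hpos _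
    have hexpand : (v - r • w) ⬝ᵥ M *ᵥ (v - r • w)
        = v ⬝ᵥ M *ᵥ v - 2 * r * (w ⬝ᵥ M *ᵥ v) + r ^ 2 * (w ⬝ᵥ M *ᵥ w) := by
      simp only [Matrix.mulVec_sub, Matrix.mulVec_smul, sub_dotProduct,
        dotProduct_sub, smul_dotProduct, dotProduct_smul,
        smul_eq_mul, hB v w]
      ring
    rw [hexpand] at hexp
    have hrw : r * (w ⬝ᵥ M *ᵥ w) = w ⬝ᵥ M *ᵥ v := div_mul_cancel₀ _ hww.ne'
    nlinarith [mul_nonneg hexp hww.le, hrw, hww]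

lemma vbmle_aux_sum_mulVec {d : ℕ} (s : Finset ℕ) (B : ℕ → Matrix (Fin d) (Fin d) ℝ)
    (v : Fin d → ℝ) : (∑ i ∈ s, B i) *ᵥ v = ∑ i ∈ s, B i *ᵥ v := by
  induction s using Finset.cons_induction with
  | empty => simp [Matrix.zero_mulVec]
  | cons a s ha ih => rw [Finset.sum_cons, Finset.sum_cons, Matrix.add_mulVec, ih]

lemma vbmle_aux_vecMulVec_mulVec {d : ℕ} (w v x : Fin d → ℝ) :
    Matrix.vecMulVec w v *ᵥ x = (v ⬝ᵥ x) • w := by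
  ext i
  simp only [Matrix.mulVec, dotProduct, Matrix.vecMulVec_apply, Pi.smul_apply,
    smul_eq_mul, Finset.sum_mul]
  exact Finset.sum_congr rfl fun j _ => by ring

lemma vbmle_aux_dotProduct_sum {d : ℕ} (s : Finset ℕ) (v : Fin d → ℝ)
    (f : ℕ → Fin d → ℝ) : v ⬝ᵥ (∑ i ∈ s, f i) = ∑ i ∈ s, v ⬝ᵥ f i := by
  induction s using Finset.cons_induction with
  | empty => simp
  | cons a s ha ih => rw [Finset.sum_cons, Finset.sum_cons, dotProduct_add, ih]

lemma vbmle_aux_div {c l0 l1 Q : ℝ} (hc0 : 0 < c)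
    (h : (1 - c) * l0 + c * l1 + c * (1 - c) / 2 * Q ≤ l0) :
    (1 - c) / 2 * Q ≤ l0 - l1 := by
  have h' : c * ((1 - c) / 2 * Q) ≤ c * (l0 - l1) := by nlinarith
  exact le_of_mul_le_mul_left h' hc0

lemma vbmle_aux_limit {Q dd : ℝ}
    (h : ∀ c : ℝ, 0 < c → c < 1 → (1 - c) / 2 * Q ≤ dd) : Q / 2 ≤ dd := by
  have h0 := h (1/2) (by norm_num) (by norm_num)
  by_contra hcon
  push_neg at hcon
  have hQpos : 0 < Q := by nlinarith
  have hddnn : 0 ≤ dd := by nlinarith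
  set u : ℝ := (Q / 2 - dd) / Q with hu
  have hu0 : 0 < u := div_pos (by linarith) hQpos
  have hu1 : u < 1 := by
    rw [hu, div_lt_one hQpos]
    linarith
  have hku := h u hu0 hu1
  have huQ : u * Q = Q / 2 - dd := div_mul_cancel₀ _ hQpos.ne'
  nlinarith [hku, huQ]

lemma vbmle_aux_combine {Gc G0 G1 C1 q0 q1 xx SE lam c l0 l1 lc Q qc : ℝ}
    (hlc : lc = Gc - C1 - lam / 2 * qc) (hl0 : l0 = G0 - C1 - lam / 2 * q0)
    (hl1 : l1 = G1 - C1 - lam / 2 * q1)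
    (hqc : qc = (1 - c) * q0 + c * q1 - c * (1 - c) * xx)
    (hQ : Q = lam * xx + SE)
    (hG : (1 - c) * G0 + c * G1 + c * (1 - c) / 2 * SE ≤ Gc) :
    (1 - c) * l0 + c * l1 + c * (1 - c) / 2 * Q ≤ lc := by
  subst hlc hl0 hl1 hqc hQ
  nlinarith [hG]

lemma vbmle_aux_numeric {pmin u0 u1 D N Q : ℝ} (hp : 0 < pmin) (hu0p : 0 < u0)
    (hu0 : pmin ≤ u0) (hN : 0 ≤ N) (hQ2D : Q ≤ 2 * D) (hCS : (u1 - u0) ^ 2 ≤ N * Q)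
    (hD1 : D ≤ (u1 - u0) / u0) : D ≤ 2 / pmin ^ 2 * N := by
  rcases le_or_gt (u1 - u0) 0 with hb | hb
  · have h2 : (u1 - u0) / u0 ≤ 0 := div_nonpos_iff.2 (Or.inr ⟨hb, hu0p.le⟩)
    have h3 : 0 ≤ 2 / pmin ^ 2 * N := by positivity
    linarith
  · have hbp : (u1 - u0) / u0 ≤ (u1 - u0) / pmin :=
      div_le_div_of_nonneg_left hb.le hp hu0
    have hD2 : D ≤ (u1 - u0) / pmin := le_trans hD1 hbp
    have hD2' : pmin * D ≤ u1 - u0 := by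
      rw [← le_div_iff₀' hp]
      exact hD2
    rcases le_or_gt D 0 with hD0 | hD0
    · have : 0 ≤ 2 / pmin ^ 2 * N := by positivity
      linarith
    · have h1 : (pmin * D) ^ 2 ≤ (u1 - u0) ^ 2 := by nlinarith [hD2', mul_pos hp hD0]
      have h2 : pmin ^ 2 * D ^ 2 ≤ 2 * N * D := by
        nlinarith [mul_le_mul_of_nonneg_left hQ2D hN]
      have h3 : pmin ^ 2 * D ≤ 2 * N := by nlinarith
      have hrw : 2 / pmin ^ 2 * N = 2 * N / pmin ^ 2 := by ring
      rw [hrw, le_div_iff₀ (by positivity)]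
      linarith

/-- one-step recursion for `Δ_t`: if `λ > 0`, then for every `t ≥ 1`,
`Δ_{t+1} ≤ Δ_t + (2 / p_min²) · ‖φ_t(s_{t+1})‖²_{A_t⁻¹}`. -/
theorem vbmle_Delta_one_step_recursion
    (d : ℕ) (hd : 1 ≤ d)
    (lam L pmin : ℝ) (hlam : 0 < lam) (hL : 0 < L)
    (hpmin0 : 0 < pmin) (hpmin1 : pmin ≤ 1)
    (S A : Type) [Fintype S] [Nonempty S] [Fintype A] [Nonempty A]
    (φ : S → A → S → (Fin d → ℝ))
    (hφ : ∀ s a s', Real.sqrt (φ s a s' ⬝ᵥ φ s a s') ≤ L)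
    (P : Set (Fin d → ℝ)) (hPne : P.Nonempty) (hPcomp : IsCompact P) (hPconv : Convex ℝ P)
    (hPsum : ∀ θ ∈ P, ∀ s a, (∑ s', φ s a s' ⬝ᵥ θ) = 1)
    (hPmin : ∀ θ ∈ P, ∀ s a s', pmin ≤ φ s a s' ⬝ᵥ θ)
    (θstar : Fin d → ℝ) (hθstar : θstar ∈ P)
    (s : ℕ → S) (a : ℕ → A)
    (ℓ : ℕ → (Fin d → ℝ) → ℝ)
    (hℓ : ∀ t θ, ℓ t θ =
      (∑ i ∈ Finset.Icc 1 (t - 1),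
        Real.log ((φ (s i) (a i) (s (i + 1)) ⬝ᵥ θ) / (φ (s i) (a i) (s (i + 1)) ⬝ᵥ θstar)))
      - lam / 2 * (θ ⬝ᵥ θ))
    (θhat : ℕ → (Fin d → ℝ))
    (hθhatmem : ∀ t, θhat t ∈ P)
    (hθhatmax : ∀ t, 1 ≤ t → ∀ θ ∈ P, ℓ t θ ≤ ℓ t (θhat t))
    (hθhat0 : θhat 0 = θhat 1)
    (A_ : ℕ → Matrix (Fin d) (Fin d) ℝ)
    (hA : ∀ t, A_ t = lam • (1 : Matrix (Fin d) (Fin d) ℝ) +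
      ∑ i ∈ Finset.Icc 1 (t - 1),
        vecMulVec (φ (s i) (a i) (s (i + 1))) (φ (s i) (a i) (s (i + 1))))
    (Δ : ℕ → ℝ)
    (hΔ : ∀ t, Δ t =
      (∑ i ∈ Finset.Icc 1 (t - 1),
        Real.log ((φ (s i) (a i) (s (i + 1)) ⬝ᵥ θhat t) / (φ (s i) (a i) (s (i + 1)) ⬝ᵥ θhat i)))
      - lam / 2 * ((θhat t ⬝ᵥ θhat t) - (θhat 0 ⬝ᵥ θhat 0))) :
    ∀ t, 1 ≤ t →
      Δ (t + 1) ≤ Δ t + 2 / pmin ^ 2 *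
        (φ (s t) (a t) (s (t + 1)) ⬝ᵥ (A_ t)⁻¹ *ᵥ φ (s t) (a t) (s (t + 1))) := by
  intro t ht
  obtain ⟨n, rfl⟩ : ∃ n, t = n + 1 := ⟨t - 1, (Nat.succ_pred_eq_of_pos ht).symm⟩
  clear ht
  set ψ : ℕ → Fin d → ℝ := fun i => φ (s i) (a i) (s (i + 1)) with hψdef
  have hfold : ∀ i, φ (s i) (a i) (s (i + 1)) = ψ i := fun i => rfl
  rw [hfold (n + 1)]
  -- basic positivity facts
  have hlb : ∀ θ ∈ P, ∀ i, pmin ≤ ψ i ⬝ᵥ θ := fun θ hθ i => hPmin θ hθ _ _ _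
  have hpos : ∀ θ ∈ P, ∀ i, (0:ℝ) < ψ i ⬝ᵥ θ := fun θ hθ i =>
    lt_of_lt_of_le hpmin0 (hlb θ hθ i)
  have hub : ∀ θ ∈ P, ∀ i, ψ i ⬝ᵥ θ ≤ 1 := by
    intro θ hθ i
    have h1 := hPsum θ hθ (s i) (a i)
    calc ψ i ⬝ᵥ θ ≤ ∑ s', φ (s i) (a i) s' ⬝ᵥ θ :=
          Finset.single_le_sum (f := fun s' => φ (s i) (a i) s' ⬝ᵥ θ)
            (fun s' _ => le_trans hpmin0.le (hPmin θ hθ _ _ _))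
            (Finset.mem_univ (s (i + 1)))
      _ = 1 := h1
  have hm0 : θhat (n + 1) ∈ P := hθhatmem _
  have hm1 : θhat (n + 1 + 1) ∈ P := hθhatmem _
  set x : Fin d → ℝ := θhat (n + 1 + 1) - θhat (n + 1) with hxdef
  -- sum splitting
  have hsplit : ∀ f : ℕ → ℝ,
      ∑ i ∈ Finset.Icc 1 (n + 1), f i = f (n + 1) + ∑ i ∈ Finset.Icc 1 n, f i := by
    intro f
    rw [← Finset.insert_Icc_right_eq_Icc_add_one (by omega : 1 ≤ n + 1), Finset.sum_insert (by simp)]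
  -- log-split formulas
  have hℓ' : ∀ τ, ∀ θ ∈ P, ℓ τ θ =
      (∑ i ∈ Finset.Icc 1 (τ - 1), Real.log (ψ i ⬝ᵥ θ))
      - (∑ i ∈ Finset.Icc 1 (τ - 1), Real.log (ψ i ⬝ᵥ θstar))
      - lam / 2 * (θ ⬝ᵥ θ) := by
    intro τ θ hθ
    rw [hℓ]
    simp only [hfold]
    rw [Finset.sum_congr rfl (fun i _ =>
      Real.log_div (hpos θ hθ i).ne' (hpos θstar hθstar i).ne'), Finset.sum_sub_distrib]
  have hΔ' : ∀ τ, Δ τ =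
      (∑ i ∈ Finset.Icc 1 (τ - 1), Real.log (ψ i ⬝ᵥ θhat τ))
      - (∑ i ∈ Finset.Icc 1 (τ - 1), Real.log (ψ i ⬝ᵥ θhat i))
      - lam / 2 * ((θhat τ ⬝ᵥ θhat τ) - (θhat 0 ⬝ᵥ θhat 0)) := by
    intro τ
    rw [hΔ]
    simp only [hfold]
    rw [Finset.sum_congr rfl (fun i _ =>
      Real.log_div (hpos _ (hθhatmem τ) i).ne' (hpos _ (hθhatmem i) i).ne'),
      Finset.sum_sub_distrib]
  -- the six equalities
  have e1 := hΔ' (n + 1 + 1)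
  have e2 := hΔ' (n + 1)
  have e3 := hℓ' (n + 1 + 1) _ hm1
  have e4 := hℓ' (n + 1 + 1) _ hm0
  have e3' := hℓ' (n + 1) _ hm1
  have e4' := hℓ' (n + 1) _ hm0
  simp only [Nat.add_sub_cancel] at e1 e2 e3 e4 e3' e4'
  have e5 := hsplit (fun i => Real.log (ψ i ⬝ᵥ θhat (n + 1)))
  have e5' := hsplit (fun i => Real.log (ψ i ⬝ᵥ θhat (n + 1 + 1)))
  have e5'' := hsplit (fun i => Real.log (ψ i ⬝ᵥ θstar))
  have e6 := hsplit (fun i => Real.log (ψ i ⬝ᵥ θhat i))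
  -- Δ difference equals ℓ difference
  have hdiff : Δ (n + 1 + 1) - Δ (n + 1)
      = ℓ (n + 1 + 1) (θhat (n + 1 + 1)) - ℓ (n + 1 + 1) (θhat (n + 1)) := by
    rw [e1, e2, e3, e4, e5, e5', e6]
    ring
  -- optimality
  have hopt1 : ℓ (n + 1) (θhat (n + 1 + 1)) ≤ ℓ (n + 1) (θhat (n + 1)) :=
    hθhatmax (n + 1) (by omega) _ hm1
  have hopt2 : ℓ (n + 1 + 1) (θhat (n + 1)) ≤ ℓ (n + 1 + 1) (θhat (n + 1 + 1)) :=
    hθhatmax (n + 1 + 1) (by omega) _ hm0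
  -- step relation for ℓ
  have hstep : ∀ θ ∈ P, ℓ (n + 1 + 1) θ = ℓ (n + 1) θ +
      (Real.log (ψ (n + 1) ⬝ᵥ θ) - Real.log (ψ (n + 1) ⬝ᵥ θstar)) := by
    intro θ hθ
    have h7 := hℓ' (n + 1 + 1) θ hθ
    have h8 := hℓ' (n + 1) θ hθ
    simp only [Nat.add_sub_cancel] at h7 h8
    rw [h7, h8, hsplit (fun i => Real.log (ψ i ⬝ᵥ θ)), e5'']
    ring
  have hupD : ℓ (n + 1 + 1) (θhat (n + 1 + 1)) - ℓ (n + 1 + 1) (θhat (n + 1))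
      ≤ Real.log (ψ (n + 1) ⬝ᵥ θhat (n + 1 + 1)) - Real.log (ψ (n + 1) ⬝ᵥ θhat (n + 1)) := by
    have g1 := hstep _ hm1
    have g2 := hstep _ hm0
    linarith
  have hlowD : ℓ (n + 1) (θhat (n + 1)) - ℓ (n + 1) (θhat (n + 1 + 1))
      ≤ Real.log (ψ (n + 1) ⬝ᵥ θhat (n + 1 + 1)) - Real.log (ψ (n + 1) ⬝ᵥ θhat (n + 1)) := by
    have g1 := hstep _ hm1
    have g2 := hstep _ hm0
    linarith
  -- strong concavity
  set Qx : ℝ := lam * (x ⬝ᵥ x) + ∑ i ∈ Finset.Icc 1 n, (ψ i ⬝ᵥ x) ^ 2 with hQxdef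
  have hxval : ∀ i, ψ i ⬝ᵥ x = ψ i ⬝ᵥ θhat (n + 1 + 1) - ψ i ⬝ᵥ θhat (n + 1) := by
    intro i
    rw [hxdef, dotProduct_sub]
  have hconcstep : ∀ c : ℝ, 0 < c → c < 1 →
      (1 - c) * ℓ (n + 1) (θhat (n + 1)) + c * ℓ (n + 1) (θhat (n + 1 + 1))
        + c * (1 - c) / 2 * Qx ≤ ℓ (n + 1) (θhat (n + 1)) := by
    intro c hc0 hc1
    set θc : Fin d → ℝ := (1 - c) • θhat (n + 1) + c • θhat (n + 1 + 1) with hθcdef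
    have hθcP : θc ∈ P := hPconv hm0 hm1 (by linarith) hc0.le (by ring)
    have hval : ∀ i, ψ i ⬝ᵥ θc
        = (1 - c) * (ψ i ⬝ᵥ θhat (n + 1)) + c * (ψ i ⬝ᵥ θhat (n + 1 + 1)) := by
      intro i
      rw [hθcdef]
      simp [dotProduct_add, dotProduct_smul, smul_eq_mul]
    have hGsum : ∑ i ∈ Finset.Icc 1 n, ((1 - c) * Real.log (ψ i ⬝ᵥ θhat (n + 1))
          + c * Real.log (ψ i ⬝ᵥ θhat (n + 1 + 1)) + c * (1 - c) * (ψ i ⬝ᵥ x) ^ 2 / 2)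
        ≤ ∑ i ∈ Finset.Icc 1 n, Real.log (ψ i ⬝ᵥ θc) := by
      apply Finset.sum_le_sum
      intro i _
      rw [hval i, hxval i]
      exact vbmle_aux_key1 (hpos _ hm0 i) (hub _ hm0 i) (hpos _ hm1 i) (hub _ hm1 i)
        hc0.le hc1.le
    have hGexp : ∑ i ∈ Finset.Icc 1 n, ((1 - c) * Real.log (ψ i ⬝ᵥ θhat (n + 1))
          + c * Real.log (ψ i ⬝ᵥ θhat (n + 1 + 1)) + c * (1 - c) * (ψ i ⬝ᵥ x) ^ 2 / 2)
        = (1 - c) * (∑ i ∈ Finset.Icc 1 n, Real.log (ψ i ⬝ᵥ θhat (n + 1)))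
          + c * (∑ i ∈ Finset.Icc 1 n, Real.log (ψ i ⬝ᵥ θhat (n + 1 + 1)))
          + c * (1 - c) / 2 * (∑ i ∈ Finset.Icc 1 n, (ψ i ⬝ᵥ x) ^ 2) := by
      rw [Finset.sum_add_distrib, Finset.sum_add_distrib, ← Finset.mul_sum, ← Finset.mul_sum]
      congr 1
      rw [Finset.mul_sum]
      exact Finset.sum_congr rfl fun i _ => by ring
    have hquad : θc ⬝ᵥ θc = (1 - c) * (θhat (n + 1) ⬝ᵥ θhat (n + 1))
        + c * (θhat (n + 1 + 1) ⬝ᵥ θhat (n + 1 + 1)) - c * (1 - c) * (x ⬝ᵥ x) := by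
      rw [hθcdef, hxdef]
      simp only [dotProduct_add, add_dotProduct, dotProduct_smul,
        smul_dotProduct, dotProduct_sub, sub_dotProduct, smul_eq_mul]
      rw [dotProduct_comm (θhat (n + 1 + 1)) (θhat (n + 1))]
      ring
    have hcf := hℓ' (n + 1) θc hθcP
    simp only [Nat.add_sub_cancel] at hcf
    have hG := hGexp ▸ hGsum
    have hfinal := vbmle_aux_combine hcf e4' e3' hquad hQxdef hG
    have hmax := hθhatmax (n + 1) (by omega) θc hθcP
    linarith
  -- limit c → 0
  have hxx : (0:ℝ) ≤ x ⬝ᵥ x :=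
    Finset.sum_nonneg fun i _ => mul_self_nonneg (x i)
  have hQnn : 0 ≤ Qx := by
    have h1 := Finset.sum_nonneg (fun i (_ : i ∈ Finset.Icc 1 n) => sq_nonneg (ψ i ⬝ᵥ x))
    have h2 : 0 ≤ lam * (x ⬝ᵥ x) := mul_nonneg hlam.le hxx
    rw [hQxdef]
    linarith
  have hsc : Qx / 2 ≤ ℓ (n + 1) (θhat (n + 1)) - ℓ (n + 1) (θhat (n + 1 + 1)) :=
    vbmle_aux_limit fun c hc0 hc1 => vbmle_aux_div hc0 (hconcstep c hc0 hc1)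
  -- the matrix A_
  have hQF : ∀ v : Fin d → ℝ, v ⬝ᵥ (A_ (n + 1)) *ᵥ v
      = lam * (v ⬝ᵥ v) + ∑ i ∈ Finset.Icc 1 n, (ψ i ⬝ᵥ v) ^ 2 := by
    intro v
    rw [hA]
    simp only [Nat.add_sub_cancel, hfold]
    rw [Matrix.add_mulVec, dotProduct_add, Matrix.smul_mulVec,
      Matrix.one_mulVec, dotProduct_smul, vbmle_aux_sum_mulVec, vbmle_aux_dotProduct_sum]
    simp only [vbmle_aux_vecMulVec_mulVec, dotProduct_smul, smul_eq_mul]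
    congr 1
    exact Finset.sum_congr rfl fun i _ => by
      rw [dotProduct_comm v (ψ i)]; ring
  have htrans : (A_ (n + 1))ᵀ = A_ (n + 1) := by
    rw [hA]
    rw [Matrix.transpose_add, Matrix.transpose_smul, Matrix.transpose_one, Matrix.transpose_sum]
    congr 1
    refine Finset.sum_congr rfl fun i _ => ?_
    ext a' b'
    simp [Matrix.transpose_apply, Matrix.vecMulVec_apply, mul_comm]
  have herm : (A_ (n + 1)).IsHermitian := by
    rw [Matrix.IsHermitian, Matrix.conjTranspose]
    ext i j
    simpa using congrFun (congrFun htrans i) j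
  have hpd : (A_ (n + 1)).PosDef := by
    refine Matrix.PosDef.of_dotProduct_mulVec_pos herm fun v hv => ?_
    have hsv : star v = v := by
      funext i; exact star_trivial _
    rw [hsv, hQF]
    have h1 : 0 < v ⬝ᵥ v := by
      rcases lt_or_eq_of_le
        (Finset.sum_nonneg fun i _ => mul_self_nonneg (v i) :
          (0:ℝ) ≤ v ⬝ᵥ v) with h | h
      · exact h
      · exact absurd (dotProduct_self_eq_zero.1 h.symm) hv
    have h2 := Finset.sum_nonneg (fun i (_ : i ∈ Finset.Icc 1 n) => sq_nonneg (ψ i ⬝ᵥ v))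
    nlinarith
  have hNnn : 0 ≤ ψ (n + 1) ⬝ᵥ (A_ (n + 1))⁻¹ *ᵥ ψ (n + 1) := by
    have := hpd.inv.posSemidef.dotProduct_mulVec_nonneg (ψ (n + 1))
    simpa using this
  have hCS : (ψ (n + 1) ⬝ᵥ x) ^ 2
      ≤ (ψ (n + 1) ⬝ᵥ (A_ (n + 1))⁻¹ *ᵥ ψ (n + 1)) * Qx := by
    have := vbmle_aux_cs hpd (ψ (n + 1)) x
    rwa [hQF x, ← hQxdef] at this
  -- final numeric combination
  set N : ℝ := ψ (n + 1) ⬝ᵥ (A_ (n + 1))⁻¹ *ᵥ ψ (n + 1) with hN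
  set u0 : ℝ := ψ (n + 1) ⬝ᵥ θhat (n + 1) with hu0
  set u1 : ℝ := ψ (n + 1) ⬝ᵥ θhat (n + 1 + 1) with hu1
  have hbval : ψ (n + 1) ⬝ᵥ x = u1 - u0 := hxval (n + 1)
  have hu0p : 0 < u0 := hpos _ hm0 (n + 1)
  have hu1p : 0 < u1 := hpos _ hm1 (n + 1)
  have hu0lb : pmin ≤ u0 := hlb _ hm0 (n + 1)
  have hD1 : Real.log u1 - Real.log u0 ≤ (u1 - u0) / u0 := by
    have h := Real.log_le_sub_one_of_pos (div_pos hu1p hu0p)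
    rw [Real.log_div hu1p.ne' hu0p.ne'] at h
    have : u1 / u0 - 1 = (u1 - u0) / u0 := by field_simp
    linarith
  have hQD : Qx ≤ 2 * (Real.log u1 - Real.log u0) := by linarith [hsc, hlowD]
  have hCS' : (u1 - u0) ^ 2 ≤ N * Qx := by rwa [hbval] at hCS
  have hDbound : Real.log u1 - Real.log u0 ≤ 2 / pmin ^ 2 * N :=
    vbmle_aux_numeric hpmin0 hu0p hu0lb hNnn hQD hCS' hD1
  calc Δ (n + 1 + 1) = Δ (n + 1)
        + (ℓ (n + 1 + 1) (θhat (n + 1 + 1)) - ℓ (n + 1 + 1) (θhat (n + 1))) := by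
        linarith [hdiff]
    _ ≤ Δ (n + 1) + (Real.log u1 - Real.log u0) := by linarith [hupD]
    _ ≤ Δ (n + 1) + 2 / pmin ^ 2 * N := by linarith [hDbound]
end

section
/- Let K ⊆ ℝ^d be convex, let f, g : ℝ^d → ℝ be differentiable, let x ∈ K be a maximizer of f over K, and let y ∈ K be a maximizer of f + g over K. Suppose A is a positive definite d×d matrix such that the strong-concavity (Taylor) bound (f+g)(y) ≤ (f+g)(x) + ⟨∇(f+g)(x), y − x⟩ − (1/2)‖y − x‖²_A holds. Then ‖y − x‖_A ≤ 2 ‖∇g(x)‖_{A^{−1}}. (This is the one-step stability bound for constrained maximum likelihood estimators.) -/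
open Matrix
open scoped RealInnerProductSpace

lemma dot_nonneg_of_posdef {d : ℕ} {A : Matrix (Fin d) (Fin d) ℝ} (hA : A.PosDef)
    (v : Fin d → ℝ) : 0 ≤ v ⬝ᵥ A *ᵥ v := by
  have := hA.posSemidef.dotProduct_mulVec_nonneg v
  simpa using this

lemma cs_aux {d : ℕ} {A : Matrix (Fin d) (Fin d) ℝ} (hA : A.PosDef) (G v : Fin d → ℝ) :
    (G ⬝ᵥ v) ^ 2 ≤ (G ⬝ᵥ A⁻¹ *ᵥ G) * (v ⬝ᵥ A *ᵥ v) := by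
  have hAinv : A * A⁻¹ = 1 := Matrix.mul_nonsing_inv A (isUnit_iff_ne_zero.2 hA.det_pos.ne')
  have hsymm : Aᵀ = A := hA.isHermitian
  set u : Fin d → ℝ := A⁻¹ *ᵥ G with hu
  have hAu : A *ᵥ u = G := by
    rw [hu, Matrix.mulVec_mulVec, hAinv, Matrix.one_mulVec]
  have key : ∀ w : Fin d → ℝ, u ⬝ᵥ A *ᵥ w = G ⬝ᵥ w := by
    intro w
    rw [Matrix.dotProduct_mulVec, ← Matrix.mulVec_transpose, hsymm, hAu]
  have huu : u ⬝ᵥ A *ᵥ u = G ⬝ᵥ A⁻¹ *ᵥ G := by rw [key, ← hu]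
  have hvu : v ⬝ᵥ A *ᵥ u = G ⬝ᵥ v := by
    rw [hAu, dotProduct_comm]
  have hq : ∀ t : ℝ, 0 ≤ (G ⬝ᵥ A⁻¹ *ᵥ G) * (t * t) + (2 * (G ⬝ᵥ v)) * t + (v ⬝ᵥ A *ᵥ v) := by
    intro t
    have h0 := dot_nonneg_of_posdef hA (v + t • u)
    have hexp : (v + t • u) ⬝ᵥ A *ᵥ (v + t • u)
        = (G ⬝ᵥ A⁻¹ *ᵥ G) * (t * t) + (2 * (G ⬝ᵥ v)) * t + (v ⬝ᵥ A *ᵥ v) := by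
      simp only [Matrix.mulVec_add, Matrix.mulVec_smul, add_dotProduct,
        dotProduct_add, smul_dotProduct, dotProduct_smul,
        smul_eq_mul, huu, hvu, key]
      ring
    linarith [hexp ▸ h0]
  have hd := discrim_le_zero hq
  rw [discrim] at hd
  nlinarith [hd]

lemma grad_inner_eq {d : ℕ} {φ : EuclideanSpace ℝ (Fin d) → ℝ} {x : EuclideanSpace ℝ (Fin d)}
    (h : DifferentiableAt ℝ φ x) (v : EuclideanSpace ℝ (Fin d)) :
    ⟪gradient φ x, v⟫ = fderiv ℝ φ x v := by
  have := h.hasGradientAt.hasFDerivAt.fderiv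
  rw [this]
  simp [InnerProductSpace.toDual_apply_apply]

/-- one-step stability bound for constrained maximizers: if `x`
maximizes `f` over the convex set `K`, `y` maximizes `f + g` over `K`, and the
strong-concavity Taylor bound holds with a positive definite matrix `A`, then
`‖y − x‖_A ≤ 2 ‖∇g(x)‖_{A⁻¹}`. -/
theorem stability_of_constrained_maximizers
    (d : ℕ)
    (K : Set (EuclideanSpace ℝ (Fin d))) (hK : Convex ℝ K)
    (f g : EuclideanSpace ℝ (Fin d) → ℝ)
    (hf : Differentiable ℝ f) (hg : Differentiable ℝ g)
    (x : EuclideanSpace ℝ (Fin d)) (hxK : x ∈ K)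
    (hxmax : ∀ w ∈ K, f w ≤ f x)
    (y : EuclideanSpace ℝ (Fin d)) (hyK : y ∈ K)
    (hymax : ∀ w ∈ K, f w + g w ≤ f y + g y)
    (A : Matrix (Fin d) (Fin d) ℝ) (hA : A.PosDef)
    (htaylor : f y + g y ≤ f x + g x + ⟪gradient (fun w => f w + g w) x, y - x⟫
      - 1 / 2 * ((y - x) ⬝ᵥ A *ᵥ (y - x))) :
    Real.sqrt ((y - x) ⬝ᵥ A *ᵥ (y - x)) ≤
      2 * Real.sqrt ((gradient g x : EuclideanSpace ℝ (Fin d)) ⬝ᵥ A⁻¹ *ᵥ (gradient g x : EuclideanSpace ℝ (Fin d))) := by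
  set v := y - x with hv
  set G : EuclideanSpace ℝ (Fin d) := gradient g x with hG
  -- first-order optimality for f at x
  have hfirst : fderiv ℝ f x v ≤ 0 := by
    have hmax : IsLocalMaxOn f K x := (isMaxOn_iff.mpr hxmax).localize
    have hcone : v ∈ posTangentConeAt K x :=
      sub_mem_posTangentConeAt_of_segment_subset (hK.segment_subset hxK hyK)
    exact hmax.hasFDerivWithinAt_nonpos ((hf x).hasFDerivAt.hasFDerivWithinAt) hcone
  -- gradient of sum pairing
  have hfg : DifferentiableAt ℝ (fun w => f w + g w) x := (hf x).add (hg x)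
  have hsum : ⟪gradient (fun w => f w + g w) x, v⟫ = fderiv ℝ f x v + ⟪G, v⟫ := by
    rw [grad_inner_eq hfg v, grad_inner_eq (hg x) v]
    have : fderiv ℝ (fun w => f w + g w) x = fderiv ℝ f x + fderiv ℝ g x :=
      fderiv_add (hf x) (hg x)
    rw [this]; rfl
  -- from the two optimality conditions
  have h1 : f x + g x ≤ f y + g y := hymax x hxK
  have h2 : 1 / 2 * (v ⬝ᵥ A *ᵥ v) ≤ ⟪G, v⟫ := by
    have := htaylor
    rw [hsum, ← WithLp.ofLp_sub (p := 2) y x] at this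
    linarith
  -- inner product is dot product
  have hdot : ⟪G, v⟫ = (G : Fin d → ℝ) ⬝ᵥ (v : Fin d → ℝ) := by
    simp [PiLp.inner_apply, dotProduct, RCLike.inner_apply, mul_comm]
  set q : ℝ := v ⬝ᵥ A *ᵥ v with hqdef
  set b : ℝ := (G : Fin d → ℝ) ⬝ᵥ A⁻¹ *ᵥ (G : Fin d → ℝ) with hbdef
  have hq0 : 0 ≤ q := dot_nonneg_of_posdef hA v
  have hb0 : 0 ≤ b := dot_nonneg_of_posdef hA.inv G
  have hcs : ((G : Fin d → ℝ) ⬝ᵥ (v : Fin d → ℝ)) ^ 2 ≤ b * q := cs_aux hA G v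
  have hqb : q ≤ 4 * b := by
    rcases eq_or_lt_of_le hq0 with h | h
    · nlinarith
    · rw [hdot] at h2
      nlinarith
  calc Real.sqrt q ≤ Real.sqrt (4 * b) := Real.sqrt_le_sqrt hqb
    _ = 2 * Real.sqrt b := by
        rw [show (4 : ℝ) * b = 2 ^ 2 * b by ring, Real.sqrt_mul (by positivity),
          Real.sqrt_sq (by norm_num)]
end

section
/- Elliptical potential lemma: if λ ≥ max{1, L²}, then for every t ≥ 1, Σ_{i=1}^{t} ‖φ_i‖²_{A_i^{−1}} ≤ 2 d · log( (dλ + t L²) / (dλ) ). -/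
open Matrix Finset

lemma my_trace_eq_sum_eigenvalues {d : ℕ} {A : Matrix (Fin d) (Fin d) ℝ} (hA : A.IsHermitian) :
    A.trace = ∑ i, hA.eigenvalues i := by
  simpa using hA.trace_eq_sum_eigenvalues

lemma my_log_ineq {x : ℝ} (h0 : 0 ≤ x) (h1 : x ≤ 1) : x ≤ 2 * Real.log (1 + x) := by
  have hp : (0:ℝ) < 1 + x := by linarith
  have h2 := Real.log_le_sub_one_of_pos (x := (1+x)⁻¹) (by positivity)
  rw [Real.log_inv] at h2
  have hl : x / (1 + x) ≤ Real.log (1 + x) := by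
    have he : (1:ℝ) - (1+x)⁻¹ = x / (1+x) := by
      rw [eq_div_iff hp.ne']; field_simp; ring
    linarith
  have hll : 0 ≤ Real.log (1 + x) := Real.log_nonneg (by linarith)
  have : x ≤ (1 + x) * Real.log (1 + x) := by
    rw [div_le_iff₀ hp] at hl; linarith [hl]
  nlinarith

lemma my_amgm {d : ℕ} (hd : 1 ≤ d) (μ : Fin d → ℝ) (hμ : ∀ i, 0 ≤ μ i) :
    ∏ i, μ i ≤ ((∑ i, μ i) / d) ^ d := by
  have hd0 : (0:ℝ) < d := by exact_mod_cast hd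
  have h := Real.geom_mean_le_arith_mean_weighted Finset.univ (fun _ => (d:ℝ)⁻¹) μ
    (fun i _ => by positivity)
    (by simp [Finset.card_univ]; field_simp)
    (fun i _ => hμ i)
  have key : (∏ i, μ i ^ ((d:ℝ)⁻¹)) ^ (d:ℕ) ≤ ((∑ i, μ i) / d) ^ d := by
    apply pow_le_pow_left₀ (Finset.prod_nonneg fun i _ => Real.rpow_nonneg (hμ i) _)
    calc ∏ i, μ i ^ ((d:ℝ)⁻¹) ≤ ∑ i, (d:ℝ)⁻¹ * μ i := h
      _ = (∑ i, μ i) / d := by rw [← Finset.mul_sum]; ring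
  calc ∏ i, μ i = (∏ i, μ i ^ ((d:ℝ)⁻¹)) ^ (d:ℕ) := by
        rw [← Finset.prod_pow]
        refine Finset.prod_congr rfl fun i _ => ?_
        rw [← Real.rpow_natCast (μ i ^ ((d:ℝ)⁻¹)) d, ← Real.rpow_mul (hμ i),
          inv_mul_cancel₀ hd0.ne', Real.rpow_one]
    _ ≤ _ := key

lemma my_det_le_trace {d : ℕ} (hd : 1 ≤ d) {A : Matrix (Fin d) (Fin d) ℝ}
    (hA : A.PosSemidef) : A.det ≤ (A.trace / d) ^ d := by
  have hdet : A.det = ∏ i, hA.1.eigenvalues i := by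
    simpa using hA.1.det_eq_prod_eigenvalues
  rw [hdet, my_trace_eq_sum_eigenvalues hA.1]
  exact my_amgm hd _ hA.eigenvalues_nonneg

lemma my_det_lemma {d : ℕ} {A : Matrix (Fin d) (Fin d) ℝ} (hA : A.PosDef) (v : Fin d → ℝ) :
    (A + vecMulVec v v).det = A.det * (1 + v ⬝ᵥ A⁻¹ *ᵥ v) := by
  have hU : IsUnit A.det := hA.det_pos.ne'.isUnit
  rw [Matrix.vecMulVec_eq Unit, Matrix.det_add_replicateCol_mul_replicateRow hU]
  congr 1
  rw [Matrix.det_unique, Matrix.add_apply, Matrix.one_apply_eq,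
    Matrix.mul_assoc, ← Matrix.replicateCol_mulVec, Matrix.replicateRow_mul_replicateCol_apply]

lemma my_posdef {d : ℕ} {lam : ℝ} (hlam : 0 < lam)
    {S : Matrix (Fin d) (Fin d) ℝ} (hS : S.PosSemidef) :
    (lam • (1 : Matrix (Fin d) (Fin d) ℝ) + S).PosDef := by
  refine Matrix.PosDef.add_posSemidef (Matrix.PosDef.of_dotProduct_mulVec_pos ?_ ?_) hS
  · show _ᴴ = _
    simp
  · intro x hx
    have hst : star x = x := by simp
    have hxx : 0 < x ⬝ᵥ x :=
      lt_of_le_of_ne (Finset.sum_nonneg fun i _ => mul_self_nonneg _)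
        (fun h => hx (dotProduct_self_eq_zero.mp h.symm))
    simp only [Matrix.smul_mulVec, Matrix.one_mulVec, dotProduct_smul, hst, smul_eq_mul]
    exact mul_pos hlam hxx

lemma my_x_mem {d : ℕ} {lam L : ℝ} (hlam : 0 < lam) (hL2 : L ^ 2 ≤ lam)
    {S : Matrix (Fin d) (Fin d) ℝ} (hS : S.PosSemidef) {v : Fin d → ℝ} (hv : v ⬝ᵥ v ≤ L ^ 2)
    {A : Matrix (Fin d) (Fin d) ℝ}
    (hAdef : A = lam • (1 : Matrix (Fin d) (Fin d) ℝ) + S) :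
    0 ≤ v ⬝ᵥ A⁻¹ *ᵥ v ∧ v ⬝ᵥ A⁻¹ *ᵥ v ≤ 1 := by
  have hA : A.PosDef := hAdef ▸ my_posdef hlam hS
  have hAi : A⁻¹.PosSemidef := hA.inv.posSemidef
  set y := A⁻¹ *ᵥ v with hy
  have h0 : 0 ≤ v ⬝ᵥ y := by
    have := hAi.dotProduct_mulVec_nonneg v
    simpa using this
  refine ⟨h0, ?_⟩
  have hAy : A *ᵥ y = v := by
    rw [hy, Matrix.mulVec_mulVec, Matrix.mul_nonsing_inv _ hA.det_pos.ne'.isUnit,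
      Matrix.one_mulVec]
  have hSy : 0 ≤ y ⬝ᵥ S *ᵥ y := by simpa using hS.dotProduct_mulVec_nonneg y
  have hyy0 : 0 ≤ y ⬝ᵥ y := Finset.sum_nonneg fun i _ => mul_self_nonneg _
  have hxy : v ⬝ᵥ y = lam * (y ⬝ᵥ y) + y ⬝ᵥ S *ᵥ y := by
    calc v ⬝ᵥ y = y ⬝ᵥ (A *ᵥ y) := by rw [hAy, dotProduct_comm]
    _ = lam * (y ⬝ᵥ y) + y ⬝ᵥ S *ᵥ y := by
        rw [hAdef, Matrix.add_mulVec, Matrix.smul_mulVec, Matrix.one_mulVec,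
          dotProduct_add, dotProduct_smul, smul_eq_mul]
  have hcs : (v ⬝ᵥ y) ^ 2 ≤ (v ⬝ᵥ v) * (y ⬝ᵥ y) := by
    have := Finset.sum_mul_sq_le_sq_mul_sq Finset.univ v y
    simp only [dotProduct, ← pow_two] at *
    simpa [pow_two] using this
  nlinarith [sq_nonneg (v ⬝ᵥ y - 1), mul_le_mul_of_nonneg_right hv hyy0,
    mul_le_mul_of_nonneg_right hL2 hyy0]

/-- elliptical potential lemma: if `λ ≥ max{1, L²}`, then for every
`t ≥ 1`, `Σ_{i=1}^{t} ‖φ_i‖²_{A_i⁻¹} ≤ 2 d · log((dλ + t L²)/(dλ))`. -/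
theorem elliptical_potential_lemma
    (d : ℕ) (hd : 1 ≤ d)
    (lam L : ℝ) (hlam : 0 < lam) (hL : 0 < L)
    (hlam' : max 1 (L ^ 2) ≤ lam)
    (φ : ℕ → Fin d → ℝ)
    (hφ : ∀ i, Real.sqrt (φ i ⬝ᵥ φ i) ≤ L)
    (A_ : ℕ → Matrix (Fin d) (Fin d) ℝ)
    (hA : ∀ t, A_ t = lam • (1 : Matrix (Fin d) (Fin d) ℝ) +
      ∑ i ∈ Finset.Icc 1 (t - 1), vecMulVec (φ i) (φ i)) :
    ∀ t, 1 ≤ t →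
      ∑ i ∈ Finset.Icc 1 t, (φ i ⬝ᵥ (A_ i)⁻¹ *ᵥ φ i) ≤
        2 * (d : ℝ) * Real.log (((d : ℝ) * lam + (t : ℝ) * L ^ 2) / ((d : ℝ) * lam)) := by
  intro t ht
  have hd0 : (0:ℝ) < d := by exact_mod_cast hd
  have hL2 : L ^ 2 ≤ lam := le_trans (le_max_right _ _) hlam'
  set B : ℕ → Matrix (Fin d) (Fin d) ℝ :=
    fun s => lam • (1 : Matrix (Fin d) (Fin d) ℝ) +
      ∑ i ∈ Finset.Icc 1 s, vecMulVec (φ i) (φ i) with hB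
  have hSps : ∀ s : ℕ, (∑ i ∈ Finset.Icc 1 s, vecMulVec (φ i) (φ i)).PosSemidef := by
    intro s
    refine Finset.sum_induction _ _ (fun a b ha hb => ha.add hb) Matrix.PosSemidef.zero ?_
    intro i _
    have : vecMulVec (φ i) (φ i) = replicateCol Unit (φ i) * (replicateCol Unit (φ i))ᴴ := by
      rw [Matrix.conjTranspose_replicateCol]
      simp [Matrix.vecMulVec_eq Unit]
    rw [this]
    exact Matrix.posSemidef_self_mul_conjTranspose _
  have hBpd : ∀ s, (B s).PosDef := fun s => my_posdef hlam (hSps s)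
  have hφ2 : ∀ i, φ i ⬝ᵥ φ i ≤ L ^ 2 := by
    intro i
    have hnn : 0 ≤ φ i ⬝ᵥ φ i := Finset.sum_nonneg fun j _ => mul_self_nonneg _
    have := pow_le_pow_left₀ (Real.sqrt_nonneg _) (hφ i) 2
    rwa [Real.sq_sqrt hnn] at this
  have hx : ∀ i : ℕ, 0 ≤ φ i ⬝ᵥ (B (i-1))⁻¹ *ᵥ φ i ∧ φ i ⬝ᵥ (B (i-1))⁻¹ *ᵥ φ i ≤ 1 :=
    fun i => my_x_mem hlam hL2 (hSps (i-1)) (hφ2 i) rfl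
  have claim : ∀ s : ℕ, ∑ i ∈ Finset.Icc 1 s, (φ i ⬝ᵥ (B (i-1))⁻¹ *ᵥ φ i) ≤
      2 * (Real.log (B s).det - d * Real.log lam) := by
    intro s
    induction s with
    | zero =>
      have : (B 0).det = lam ^ d := by
        simp [hB, Matrix.det_smul]
      simp [this, Real.log_pow]
    | succ n ih =>
      rw [Finset.sum_Icc_succ_top (Nat.le_add_left 1 n)]
      have hBsucc : B (n+1) = B n + vecMulVec (φ (n+1)) (φ (n+1)) := by
        rw [hB]
        simp only []
        rw [Finset.sum_Icc_succ_top (Nat.le_add_left 1 n), add_assoc]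
      have hdet := my_det_lemma (hBpd n) (φ (n+1))
      have hxn := hx (n+1)
      simp only [Nat.add_sub_cancel] at hxn
      have hpos1 : (0:ℝ) < 1 + φ (n+1) ⬝ᵥ (B n)⁻¹ *ᵥ φ (n+1) := by linarith [hxn.1]
      have hlog : Real.log (B (n+1)).det =
          Real.log (B n).det + Real.log (1 + φ (n+1) ⬝ᵥ (B n)⁻¹ *ᵥ φ (n+1)) := by
        rw [hBsucc, hdet, Real.log_mul (hBpd n).det_pos.ne' hpos1.ne']
      have hkey := my_log_ineq hxn.1 hxn.2
      simp only [Nat.add_sub_cancel]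
      linarith
  have hsum_eq : ∑ i ∈ Finset.Icc 1 t, (φ i ⬝ᵥ (A_ i)⁻¹ *ᵥ φ i) =
      ∑ i ∈ Finset.Icc 1 t, (φ i ⬝ᵥ (B (i-1))⁻¹ *ᵥ φ i) :=
    Finset.sum_congr rfl fun i _ => by rw [hA i]
  -- trace bound
  set c : ℝ := (d : ℝ) * lam + (t : ℝ) * L ^ 2 with hc
  have hcpos : 0 < c := by positivity
  have htr : (B t).trace ≤ c := by
    have htr1 : (B t).trace = (d:ℝ) * lam + ∑ i ∈ Finset.Icc 1 t, (φ i ⬝ᵥ φ i) := by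
      rw [hB]
      simp only []
      rw [Matrix.trace_add, Matrix.trace_smul, Matrix.trace_one, Matrix.trace_sum]
      have he : ∀ i, (vecMulVec (φ i) (φ i)).trace = φ i ⬝ᵥ φ i := fun i => by
        rw [Matrix.vecMulVec_eq Unit, Matrix.trace_replicateCol_mul_replicateRow]
      simp only [he, smul_eq_mul, Fintype.card_fin]
      ring
    rw [htr1, hc]
    have : ∑ i ∈ Finset.Icc 1 t, (φ i ⬝ᵥ φ i) ≤ (t : ℝ) * L ^ 2 := by
      calc ∑ i ∈ Finset.Icc 1 t, (φ i ⬝ᵥ φ i) ≤ ∑ i ∈ Finset.Icc 1 t, L ^ 2 :=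
            Finset.sum_le_sum fun i _ => hφ2 i
        _ = (t : ℝ) * L ^ 2 := by
            rw [Finset.sum_const, Nat.card_Icc]
            simp [nsmul_eq_mul]
    linarith
  have htrpos : 0 < (B t).trace := by
    have : (B t).trace = ∑ i, ((hBpd t).posSemidef.1.eigenvalues i) :=
      my_trace_eq_sum_eigenvalues _
    rw [this]
    refine Finset.sum_pos (fun i _ => (hBpd t).eigenvalues_pos i) ?_
    exact Finset.univ_nonempty_iff.mpr (Fin.pos_iff_nonempty.mp hd)
  have hdetle : (B t).det ≤ (c / d) ^ d := by
    refine le_trans (my_det_le_trace hd (hBpd t).posSemidef) ?_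
    gcongr
  have hlogdet : Real.log (B t).det ≤ d * Real.log (c / d) := by
    calc Real.log (B t).det ≤ Real.log ((c / d) ^ d) :=
          Real.log_le_log (hBpd t).det_pos hdetle
      _ = d * Real.log (c / d) := by rw [Real.log_pow]
  have hfin : Real.log (c / ((d:ℝ) * lam)) = Real.log (c / d) - Real.log lam := by
    rw [Real.log_div hcpos.ne' (by positivity), Real.log_div hcpos.ne' hd0.ne',
      Real.log_mul hd0.ne' hlam.ne']
    ring
  rw [hsum_eq]
  refine le_trans (claim t) ?_
  rw [hfin]
  linarith [hlogdet]
end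

section
/- For every t ≥ 1, ℓ_{t+1}(θ̂_t) − ℓ_{t+1}(θ*) ≥ (1/2)·‖θ̂_t − θ*‖²_{A_t} − 1/p_min. -/
open Matrix Finset

/-- Strong concavity of `log` on `(0,1]`: second-order upper bound around `w`. -/
lemma log_sc {w u : ℝ} (hw0 : 0 < w) (hw1 : w ≤ 1) (hu0 : 0 < u) (hu1 : u ≤ 1) :
    Real.log u ≤ Real.log w + (u - w) / w - (u - w) ^ 2 / 2 := by
  set F : ℝ → ℝ := fun x => x / w - (x - w) ^ 2 / 2 - Real.log x with hF
  have hder : ∀ x : ℝ, 0 < x → HasDerivAt F (1 / w - (x - w) - x⁻¹) x := by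
    intro x hx
    have h1 : HasDerivAt (fun y : ℝ => y / w) (1 / w) x := by
      simpa using (hasDerivAt_id x).div_const w
    have h2 : HasDerivAt (fun y : ℝ => (y - w) ^ 2 / 2) (x - w) x := by
      have h := (((hasDerivAt_id x).sub_const w).pow 2).div_const 2
      exact (h : HasDerivAt (fun y : ℝ => (y - w) ^ 2 / 2) _ x).congr_deriv (by simp)
    have h3 : HasDerivAt Real.log x⁻¹ x := Real.hasDerivAt_log (ne_of_gt hx)
    exact (h1.sub h2).sub h3
  have key : F w ≤ F u := by
    rcases le_total u w with huw | huw
    · have hA : AntitoneOn F (Set.Icc u w) := by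
        apply antitoneOn_of_deriv_nonpos (convex_Icc u w)
        · intro x hx
          exact (hder x (lt_of_lt_of_le hu0 hx.1)).continuousAt.continuousWithinAt
        · intro x hx
          rw [interior_Icc] at hx
          exact (hder x (lt_trans hu0 hx.1)).differentiableAt.differentiableWithinAt
        · intro x hx
          rw [interior_Icc] at hx
          have hx0 : 0 < x := lt_trans hu0 hx.1
          rw [(hder x hx0).deriv]
          have hxw : x ≤ w := le_of_lt hx.2
          have hxw1 : x * w ≤ 1 := by nlinarith
          have e1 : 1 / w - x⁻¹ = (x - w) / (x * w) := by
            field_simp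
          have e2 : (x - w) / (x * w) - (x - w) = (x - w) * (1 - x * w) / (x * w) := by
            field_simp
          have e3 : (x - w) * (1 - x * w) / (x * w) ≤ 0 :=
            div_nonpos_of_nonpos_of_nonneg (mul_nonpos_of_nonpos_of_nonneg (by linarith) (by linarith))
              (le_of_lt (mul_pos hx0 hw0))
          linarith
      exact hA (Set.mem_Icc.mpr ⟨le_rfl, huw⟩) (Set.mem_Icc.mpr ⟨huw, le_rfl⟩) huw
    · have hM : MonotoneOn F (Set.Icc w u) := by
        apply monotoneOn_of_deriv_nonneg (convex_Icc w u)
        · intro x hx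
          exact (hder x (lt_of_lt_of_le hw0 hx.1)).continuousAt.continuousWithinAt
        · intro x hx
          rw [interior_Icc] at hx
          exact (hder x (lt_trans hw0 hx.1)).differentiableAt.differentiableWithinAt
        · intro x hx
          rw [interior_Icc] at hx
          have hx0 : 0 < x := lt_trans hw0 hx.1
          rw [(hder x hx0).deriv]
          have hxw : w ≤ x := le_of_lt hx.1
          have hxu1 : x ≤ 1 := le_trans (le_of_lt hx.2) hu1
          have hxw1 : x * w ≤ 1 := by nlinarith
          have e1 : 1 / w - x⁻¹ = (x - w) / (x * w) := by
            field_simp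
          have e2 : (x - w) / (x * w) - (x - w) = (x - w) * (1 - x * w) / (x * w) := by
            field_simp
          have e3 : 0 ≤ (x - w) * (1 - x * w) / (x * w) :=
            div_nonneg (mul_nonneg (by linarith) (by linarith)) (le_of_lt (mul_pos hx0 hw0))
          linarith
      exact hM (Set.mem_Icc.mpr ⟨le_rfl, huw⟩) (Set.mem_Icc.mpr ⟨huw, le_rfl⟩) huw
  have hFw : F w = 1 - Real.log w := by
    simp only [hF]
    rw [div_self (ne_of_gt hw0)]
    ring
  have hFu : F u = u / w - (u - w) ^ 2 / 2 - Real.log u := rfl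
  have huw' : (u - w) / w = u / w - 1 := by
    field_simp
  rw [hFw, hFu] at key
  linarith

/-- Strong concavity interpolation inequality for `log` on `(0,1]`. -/
lemma log_interp (x y τ : ℝ) (hx0 : 0 < x) (hx1 : x ≤ 1) (hy0 : 0 < y) (hy1 : y ≤ 1)
    (hτ0 : 0 ≤ τ) (hτ1 : τ ≤ 1) :
    (1 - τ) * Real.log x + τ * Real.log y + τ * (1 - τ) * (y - x) ^ 2 / 2
      ≤ Real.log (τ * y + (1 - τ) * x) := by
  set m := τ * y + (1 - τ) * x with hm
  have hm0 : 0 < m := by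
    rcases le_total x y with h | h
    · nlinarith [mul_nonneg hτ0 (sub_nonneg.mpr h)]
    · nlinarith [mul_nonneg (by linarith : (0:ℝ) ≤ 1 - τ) (sub_nonneg.mpr h)]
  have hm1 : m ≤ 1 := by
    nlinarith [mul_le_mul_of_nonneg_left hy1 hτ0,
      mul_le_mul_of_nonneg_left hx1 (by linarith : (0:ℝ) ≤ 1 - τ)]
  have h1 := log_sc hm0 hm1 hx0 hx1
  have h2 := log_sc hm0 hm1 hy0 hy1
  have e0 : x - m = τ * (x - y) := by rw [hm]; ring
  have e1 : y - m = (1 - τ) * (y - x) := by rw [hm]; ring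
  rw [e0] at h1
  rw [e1] at h2
  have h1' := mul_le_mul_of_nonneg_left h1 (by linarith : (0:ℝ) ≤ 1 - τ)
  have h2' := mul_le_mul_of_nonneg_left h2 hτ0
  have ez : (1 - τ) * (τ * (x - y) / m) + τ * ((1 - τ) * (y - x) / m) = 0 := by
    field_simp
    ring
  nlinarith [h1', h2', ez]

lemma dot_comb {d : ℕ} (ψ u v : Fin d → ℝ) (τ : ℝ) :
    ψ ⬝ᵥ (τ • v + (1 - τ) • u) = τ * (ψ ⬝ᵥ v) + (1 - τ) * (ψ ⬝ᵥ u) := by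
  rw [dotProduct_add, dotProduct_smul, dotProduct_smul]
  simp [smul_eq_mul]

lemma dot_self_comb {d : ℕ} (u v : Fin d → ℝ) (τ : ℝ) :
    (τ • v + (1 - τ) • u) ⬝ᵥ (τ • v + (1 - τ) • u)
      = τ * (v ⬝ᵥ v) + (1 - τ) * (u ⬝ᵥ u) - τ * (1 - τ) * ((u - v) ⬝ᵥ (u - v)) := by
  simp only [dotProduct, Pi.add_apply, Pi.smul_apply, Pi.sub_apply, smul_eq_mul,
    Finset.mul_sum, ← Finset.sum_sub_distrib, ← Finset.sum_add_distrib]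
  exact Finset.sum_congr rfl fun i _ => by ring

lemma quad_expand {d : ℕ} (lam : ℝ) (I : Finset ℕ) (ψ : ℕ → Fin d → ℝ) (v : Fin d → ℝ) :
    v ⬝ᵥ (lam • (1 : Matrix (Fin d) (Fin d) ℝ) + ∑ i ∈ I, vecMulVec (ψ i) (ψ i)) *ᵥ v
      = lam * (v ⬝ᵥ v) + ∑ i ∈ I, (ψ i ⬝ᵥ v) ^ 2 := by
  rw [Matrix.add_mulVec, dotProduct_add]
  congr 1
  · rw [Matrix.smul_mulVec, Matrix.one_mulVec, dotProduct_smul, smul_eq_mul]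
  · have hmv : (∑ i ∈ I, vecMulVec (ψ i) (ψ i)) *ᵥ v = ∑ i ∈ I, (ψ i ⬝ᵥ v) • ψ i := by
      funext j
      simp only [Matrix.mulVec, dotProduct, Matrix.sum_apply, Finset.sum_apply,
        Pi.smul_apply, Matrix.vecMulVec_apply, smul_eq_mul, Finset.sum_mul]
      rw [Finset.sum_comm]
      exact Finset.sum_congr rfl fun i _ => Finset.sum_congr rfl fun k _ => by ring
    rw [hmv]
    clear hmv
    induction I using Finset.induction with
    | empty => simp
    | insert _ _ h ih =>
      rw [Finset.sum_insert h, Finset.sum_insert h, dotProduct_add, dotProduct_smul,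
        smul_eq_mul, ih, dotProduct_comm v]
      ring

/-- Abstract strong-concavity lower bound for the maximizer gap. -/
lemma strong_concavity_aux {d : ℕ} (lam : ℝ) (hlam : 0 ≤ lam) (I : Finset ℕ)
    (ψ : ℕ → Fin d → ℝ) (u v : Fin d → ℝ)
    (hbound : ∀ τ : ℝ, 0 ≤ τ → τ ≤ 1 → ∀ i ∈ I,
      0 < ψ i ⬝ᵥ (τ • v + (1 - τ) • u) ∧ ψ i ⬝ᵥ (τ • v + (1 - τ) • u) ≤ 1)
    (hmax : ∀ τ : ℝ, 0 < τ → τ ≤ 1 →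
      (∑ i ∈ I, Real.log (ψ i ⬝ᵥ (τ • v + (1 - τ) • u)))
          - lam / 2 * ((τ • v + (1 - τ) • u) ⬝ᵥ (τ • v + (1 - τ) • u))
        ≤ (∑ i ∈ I, Real.log (ψ i ⬝ᵥ u)) - lam / 2 * (u ⬝ᵥ u)) :
    ((∑ i ∈ I, Real.log (ψ i ⬝ᵥ u)) - lam / 2 * (u ⬝ᵥ u))
      - ((∑ i ∈ I, Real.log (ψ i ⬝ᵥ v)) - lam / 2 * (v ⬝ᵥ v))
      ≥ (lam * ((u - v) ⬝ᵥ (u - v)) + ∑ i ∈ I, (ψ i ⬝ᵥ (u - v)) ^ 2) / 2 := by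
  have hu_bounds : ∀ i ∈ I, 0 < ψ i ⬝ᵥ u ∧ ψ i ⬝ᵥ u ≤ 1 := by
    intro i hi
    have h := hbound 0 le_rfl zero_le_one i hi
    simpa using h
  have hv_bounds : ∀ i ∈ I, 0 < ψ i ⬝ᵥ v ∧ ψ i ⬝ᵥ v ≤ 1 := by
    intro i hi
    have h := hbound 1 zero_le_one le_rfl i hi
    simpa using h
  have hr2 : 0 ≤ (u - v) ⬝ᵥ (u - v) := by
    have : (u - v) ⬝ᵥ (u - v) = ∑ j, (u - v) j * (u - v) j := rfl
    rw [this]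
    exact Finset.sum_nonneg fun j _ => mul_self_nonneg _
  have hSL0 : 0 ≤ ∑ i ∈ I, (ψ i ⬝ᵥ (u - v)) ^ 2 := Finset.sum_nonneg fun i _ => sq_nonneg _
  have hQ0 : 0 ≤ lam * ((u - v) ⬝ᵥ (u - v)) + ∑ i ∈ I, (ψ i ⬝ᵥ (u - v)) ^ 2 :=
    add_nonneg (mul_nonneg hlam hr2) hSL0
  have key : ∀ τ : ℝ, 0 < τ → τ ≤ 1 →
      (1 - τ) * ((lam * ((u - v) ⬝ᵥ (u - v)) + ∑ i ∈ I, (ψ i ⬝ᵥ (u - v)) ^ 2) / 2)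
        ≤ ((∑ i ∈ I, Real.log (ψ i ⬝ᵥ u)) - lam / 2 * (u ⬝ᵥ u))
            - ((∑ i ∈ I, Real.log (ψ i ⬝ᵥ v)) - lam / 2 * (v ⬝ᵥ v)) := by
    intro τ hτ0 hτ1
    have hτ0' : 0 ≤ τ := le_of_lt hτ0
    have hterm : ∀ i ∈ I,
        (1 - τ) * Real.log (ψ i ⬝ᵥ u) + τ * Real.log (ψ i ⬝ᵥ v)
            + τ * (1 - τ) / 2 * (ψ i ⬝ᵥ (u - v)) ^ 2
          ≤ Real.log (ψ i ⬝ᵥ (τ • v + (1 - τ) • u)) := by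
      intro i hi
      have hcu := hu_bounds i hi
      have hcv := hv_bounds i hi
      have hli := log_interp (ψ i ⬝ᵥ u) (ψ i ⬝ᵥ v) τ hcu.1 hcu.2 hcv.1 hcv.2 hτ0' hτ1
      have hdiff : ψ i ⬝ᵥ (u - v) = ψ i ⬝ᵥ u - ψ i ⬝ᵥ v := dotProduct_sub _ _ _
      rw [dot_comb, hdiff]
      nlinarith [hli]
    have hsum : ∑ i ∈ I, ((1 - τ) * Real.log (ψ i ⬝ᵥ u) + τ * Real.log (ψ i ⬝ᵥ v)
            + τ * (1 - τ) / 2 * (ψ i ⬝ᵥ (u - v)) ^ 2)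
          ≤ ∑ i ∈ I, Real.log (ψ i ⬝ᵥ (τ • v + (1 - τ) • u)) :=
      Finset.sum_le_sum hterm
    have hsplit : ∑ i ∈ I, ((1 - τ) * Real.log (ψ i ⬝ᵥ u) + τ * Real.log (ψ i ⬝ᵥ v)
            + τ * (1 - τ) / 2 * (ψ i ⬝ᵥ (u - v)) ^ 2)
        = (1 - τ) * (∑ i ∈ I, Real.log (ψ i ⬝ᵥ u)) + τ * (∑ i ∈ I, Real.log (ψ i ⬝ᵥ v))
            + τ * (1 - τ) / 2 * (∑ i ∈ I, (ψ i ⬝ᵥ (u - v)) ^ 2) := by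
      rw [Finset.mul_sum, Finset.mul_sum, Finset.mul_sum, ← Finset.sum_add_distrib,
        ← Finset.sum_add_distrib]
    rw [hsplit] at hsum
    have hmaxτ := hmax τ hτ0 hτ1
    rw [dot_self_comb] at hmaxτ
    have Hτ : τ * ((1 - τ) * ((lam * ((u - v) ⬝ᵥ (u - v)) + ∑ i ∈ I, (ψ i ⬝ᵥ (u - v)) ^ 2) / 2))
        ≤ τ * (((∑ i ∈ I, Real.log (ψ i ⬝ᵥ u)) - lam / 2 * (u ⬝ᵥ u))
            - ((∑ i ∈ I, Real.log (ψ i ⬝ᵥ v)) - lam / 2 * (v ⬝ᵥ v))) := by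
      nlinarith [hsum, hmaxτ]
    exact le_of_mul_le_mul_left Hτ hτ0
  have hD0 : 0 ≤ ((∑ i ∈ I, Real.log (ψ i ⬝ᵥ u)) - lam / 2 * (u ⬝ᵥ u))
      - ((∑ i ∈ I, Real.log (ψ i ⬝ᵥ v)) - lam / 2 * (v ⬝ᵥ v)) := by
    have h := key 1 one_pos le_rfl
    linarith
  by_contra hcon
  push_neg at hcon
  set D := ((∑ i ∈ I, Real.log (ψ i ⬝ᵥ u)) - lam / 2 * (u ⬝ᵥ u))
      - ((∑ i ∈ I, Real.log (ψ i ⬝ᵥ v)) - lam / 2 * (v ⬝ᵥ v)) with hD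
  set q := (lam * ((u - v) ⬝ᵥ (u - v)) + ∑ i ∈ I, (ψ i ⬝ᵥ (u - v)) ^ 2) / 2 with hq
  have hqpos : 0 < q := lt_of_le_of_lt hD0 hcon
  have hτpos : 0 < (q - D) / (2 * q) := div_pos (by linarith) (by linarith)
  have hτle : (q - D) / (2 * q) ≤ 1 := by
    rw [div_le_one (by linarith)]
    linarith
  have hk := key ((q - D) / (2 * q)) hτpos hτle
  have hcomp : (1 - (q - D) / (2 * q)) * q = (q + D) / 2 := by
    field_simp
    ring
  rw [hcomp] at hk
  clear_value D q
  linarith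

/-- for every `t ≥ 1`,
`ℓ_{t+1}(θ̂_t) − ℓ_{t+1}(θ*) ≥ (1/2)·‖θ̂_t − θ*‖²_{A_t} − 1/p_min`. -/
theorem vbmle_loglik_gap_lower_bound
    (d : ℕ) (hd : 1 ≤ d)
    (lam L pmin : ℝ) (hlam : 0 ≤ lam) (hL : 0 < L)
    (hpmin0 : 0 < pmin) (hpmin1 : pmin ≤ 1)
    (S A : Type) [Fintype S] [Nonempty S] [Fintype A] [Nonempty A]
    (φ : S → A → S → (Fin d → ℝ))
    (hφ : ∀ s a s', Real.sqrt (φ s a s' ⬝ᵥ φ s a s') ≤ L)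
    (P : Set (Fin d → ℝ)) (hPne : P.Nonempty) (hPcomp : IsCompact P) (hPconv : Convex ℝ P)
    (hPsum : ∀ θ ∈ P, ∀ s a, (∑ s', φ s a s' ⬝ᵥ θ) = 1)
    (hPmin : ∀ θ ∈ P, ∀ s a s', pmin ≤ φ s a s' ⬝ᵥ θ)
    (θstar : Fin d → ℝ) (hθstar : θstar ∈ P)
    (s : ℕ → S) (a : ℕ → A)
    (ℓ : ℕ → (Fin d → ℝ) → ℝ)
    (hℓ : ∀ t θ, ℓ t θ =
      (∑ i ∈ Finset.Icc 1 (t - 1),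
        Real.log ((φ (s i) (a i) (s (i + 1)) ⬝ᵥ θ) / (φ (s i) (a i) (s (i + 1)) ⬝ᵥ θstar)))
      - lam / 2 * (θ ⬝ᵥ θ))
    (θhat : ℕ → (Fin d → ℝ))
    (hθhatmem : ∀ t, θhat t ∈ P)
    (hθhatmax : ∀ t, 1 ≤ t → ∀ θ ∈ P, ℓ t θ ≤ ℓ t (θhat t))
    (A_ : ℕ → Matrix (Fin d) (Fin d) ℝ)
    (hA : ∀ t, A_ t = lam • (1 : Matrix (Fin d) (Fin d) ℝ) +
      ∑ i ∈ Finset.Icc 1 (t - 1),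
        vecMulVec (φ (s i) (a i) (s (i + 1))) (φ (s i) (a i) (s (i + 1)))) :
    ∀ t, 1 ≤ t →
      ℓ (t + 1) (θhat t) - ℓ (t + 1) θstar ≥
        1 / 2 * ((θhat t - θstar) ⬝ᵥ (A_ t) *ᵥ (θhat t - θstar)) - 1 / pmin := by
  intro t ht
  -- basic positivity / boundedness facts
  have hpos : ∀ θ ∈ P, ∀ i : ℕ, 0 < φ (s i) (a i) (s (i + 1)) ⬝ᵥ θ := fun θ hθ i =>
    lt_of_lt_of_le hpmin0 (hPmin θ hθ _ _ _)
  have hle1 : ∀ θ ∈ P, ∀ i : ℕ, φ (s i) (a i) (s (i + 1)) ⬝ᵥ θ ≤ 1 := by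
    intro θ hθ i
    have hsum := hPsum θ hθ (s i) (a i)
    have hsingle : φ (s i) (a i) (s (i + 1)) ⬝ᵥ θ ≤ ∑ s', φ (s i) (a i) s' ⬝ᵥ θ :=
      Finset.single_le_sum (f := fun s' => φ (s i) (a i) s' ⬝ᵥ θ)
        (fun s' _ => le_trans (le_of_lt hpmin0) (hPmin θ hθ _ _ _))
        (Finset.mem_univ (s (i + 1)))
    linarith
  -- log-split form of ℓ on P
  have hform : ∀ n : ℕ, ∀ θ ∈ P, ℓ n θ =
      ((∑ i ∈ Finset.Icc 1 (n - 1), Real.log (φ (s i) (a i) (s (i + 1)) ⬝ᵥ θ))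
        - (∑ i ∈ Finset.Icc 1 (n - 1), Real.log (φ (s i) (a i) (s (i + 1)) ⬝ᵥ θstar)))
      - lam / 2 * (θ ⬝ᵥ θ) := by
    intro n θ hθ
    rw [hℓ, ← Finset.sum_sub_distrib]
    congr 1
    refine Finset.sum_congr rfl fun i _ => ?_
    exact Real.log_div (ne_of_gt (hpos θ hθ i)) (ne_of_gt (hpos θstar hθstar i))
  -- strong concavity core bound
  have hcore := strong_concavity_aux lam hlam (Finset.Icc 1 (t - 1))
    (fun i => φ (s i) (a i) (s (i + 1))) (θhat t) θstar
    (by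
      intro τ hτ0 hτ1 i hi
      have hw : τ • θstar + (1 - τ) • θhat t ∈ P :=
        hPconv hθstar (hθhatmem t) hτ0 (by linarith) (by ring)
      exact ⟨hpos _ hw i, hle1 _ hw i⟩)
    (by
      intro τ hτ0 hτ1
      have hw : τ • θstar + (1 - τ) • θhat t ∈ P :=
        hPconv hθstar (hθhatmem t) (le_of_lt hτ0) (by linarith) (by ring)
      have hmax := hθhatmax t ht _ hw
      rw [hform t _ hw, hform t _ (hθhatmem t)] at hmax
      linarith)
  -- splitting the sum at index t
  have hts : t - 1 + 1 = t := Nat.succ_pred_eq_of_pos ht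
  have hsplit : ∀ g : ℕ → ℝ,
      ∑ i ∈ Finset.Icc 1 t, g i = (∑ i ∈ Finset.Icc 1 (t - 1), g i) + g t := by
    intro g
    have h := Finset.sum_Icc_succ_top (a := 1) (b := t - 1) (by omega) g
    rw [hts] at h
    exact h
  -- rewrite ℓ (t+1)
  have hL1 : ℓ (t + 1) (θhat t) = ℓ t (θhat t)
      + (Real.log (φ (s t) (a t) (s (t + 1)) ⬝ᵥ θhat t)
        - Real.log (φ (s t) (a t) (s (t + 1)) ⬝ᵥ θstar)) := by
    rw [hform (t + 1) _ (hθhatmem t), hform t _ (hθhatmem t)]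
    simp only [Nat.add_sub_cancel]
    rw [hsplit, hsplit]
    ring
  have hL2 : ℓ (t + 1) θstar = ℓ t θstar := by
    rw [hform (t + 1) _ hθstar, hform t _ hθstar]
    simp only [Nat.add_sub_cancel]
    rw [hsplit]
    ring
  -- ℓ difference at t in split form
  have hDform : ℓ t (θhat t) - ℓ t θstar =
      ((∑ i ∈ Finset.Icc 1 (t - 1), Real.log (φ (s i) (a i) (s (i + 1)) ⬝ᵥ θhat t))
        - lam / 2 * (θhat t ⬝ᵥ θhat t))
      - ((∑ i ∈ Finset.Icc 1 (t - 1), Real.log (φ (s i) (a i) (s (i + 1)) ⬝ᵥ θstar))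
        - lam / 2 * (θstar ⬝ᵥ θstar)) := by
    rw [hform t _ (hθhatmem t), hform t _ hθstar]
    ring
  -- the extra log term bound
  have hxt : pmin ≤ φ (s t) (a t) (s (t + 1)) ⬝ᵥ θhat t := hPmin _ (hθhatmem t) _ _ _
  have hyt1 : φ (s t) (a t) (s (t + 1)) ⬝ᵥ θstar ≤ 1 := hle1 _ hθstar t
  have hlogx : Real.log pmin ≤ Real.log (φ (s t) (a t) (s (t + 1)) ⬝ᵥ θhat t) :=
    Real.log_le_log hpmin0 hxt
  have hlogy : Real.log (φ (s t) (a t) (s (t + 1)) ⬝ᵥ θstar) ≤ 0 :=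
    Real.log_nonpos (le_of_lt (hpos θstar hθstar t)) hyt1
  have hlogpmin : 1 - 1 / pmin ≤ Real.log pmin := by
    have h := Real.log_le_sub_one_of_pos (inv_pos.mpr hpmin0)
    rw [Real.log_inv] at h
    rw [one_div]
    linarith
  -- quadratic form rewrite
  have hquad : (θhat t - θstar) ⬝ᵥ (A_ t) *ᵥ (θhat t - θstar)
      = lam * ((θhat t - θstar) ⬝ᵥ (θhat t - θstar))
        + ∑ i ∈ Finset.Icc 1 (t - 1),
            ((fun i => φ (s i) (a i) (s (i + 1))) i ⬝ᵥ (θhat t - θstar)) ^ 2 := by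
    rw [hA t]
    exact quad_expand lam _ _ _
  beta_reduce at hcore
  rw [hL1, hL2, hquad]
  beta_reduce
  have hinv : 0 < 1 / pmin := by positivity
  linarith [hcore, hDform, hlogx, hlogy, hlogpmin]
end
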